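/- arXiv:1905.12010 — 9 statements merged into one kernel-verified Lean document; each statement's English description precedes it below -/
import Mathlib

section
/- Let D be a digraph on vertex set [n] and s ∈ [n]^m. Then s is a parking function on D if and only if for every subset B ⊆ [n] of vertices, the number of indices i with s_i ∈ R_D(B) is at most |R_D(B)|, where R_D(B) = ⋃_{v ∈ B} R_D(v). -/
/-- A sequence `s` is a parking function on `D` iff for every vertex subset `B`,
the number of drivers preferring a vertex in `R_D(B)` is at most `|R_D(B)|`. -/
theorem parking_function_iff_hall_vertices (n m : ℕ) (D : Fin n → Fin n → Prop)
    (s : Fin m → Fin n) :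
    (∃ g : Fin m → Fin n, Function.Injective g ∧
        ∀ i, Relation.ReflTransGen D (s i) (g i)) ↔
      ∀ B : Set (Fin n),
        {i : Fin m | ∃ b ∈ B, Relation.ReflTransGen D b (s i)}.ncard ≤
          {v : Fin n | ∃ b ∈ B, Relation.ReflTransGen D b v}.ncard := by
  classical
  constructor
  · rintro ⟨g, hg, hr⟩ B
    have hsub : g '' {i : Fin m | ∃ b ∈ B, Relation.ReflTransGen D b (s i)} ⊆
        {v : Fin n | ∃ b ∈ B, Relation.ReflTransGen D b v} := by
      rintro v ⟨i, ⟨b, hb, hbs⟩, rfl⟩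
      exact ⟨b, hb, hbs.trans (hr i)⟩
    calc {i : Fin m | ∃ b ∈ B, Relation.ReflTransGen D b (s i)}.ncard
        = (g '' {i : Fin m | ∃ b ∈ B, Relation.ReflTransGen D b (s i)}).ncard :=
          (Set.ncard_image_of_injective _ hg).symm
      _ ≤ _ := Set.ncard_le_ncard hsub (Set.toFinite _)
  · intro h
    set t : Fin m → Finset (Fin n) :=
      fun i => Finset.univ.filter (fun v => Relation.ReflTransGen D (s i) v) with ht
    have main := (Finset.all_card_le_biUnion_card_iff_exists_injective t).mp ?_
    · obtain ⟨g, hg, hmem⟩ := main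
      refine ⟨g, hg, fun i => ?_⟩
      have := hmem i
      simp [ht] at this
      exact this
    · intro A
      have key := h (↑(A.image s))
      have h1 : (A : Set (Fin m)) ⊆
          {i | ∃ b ∈ (↑(A.image s) : Set (Fin n)), Relation.ReflTransGen D b (s i)} := by
        intro i hi
        exact ⟨s i, by simpa using ⟨i, hi, rfl⟩, Relation.ReflTransGen.refl⟩
      have h2 : {v : Fin n | ∃ b ∈ (↑(A.image s) : Set (Fin n)), Relation.ReflTransGen D b v}
          = ↑(A.biUnion t) := by
        ext v
        simp [ht]

      calc A.card = (A : Set (Fin m)).ncard := (Set.ncard_coe_finset _).symm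
        _ ≤ _ := Set.ncard_le_ncard h1 (Set.toFinite _)
        _ ≤ _ := key
        _ = (A.biUnion t).card := by rw [h2, Set.ncard_coe_finset]
end

section
/- Let T̃ be a source tree on [n] (a rooted tree with all edges oriented away from the root) and s ∈ [n]^m. Then s is a parking function on T̃ if and only if for every vertex u ∈ [n], the number of indices i with s_i in the subtree T̃_u rooted at u is at most |T̃_u|. -/
def IsSourceTree {n : ℕ} (D : Fin n → Fin n → Prop) (r : Fin n) : Prop :=
  (∀ v, Relation.ReflTransGen D r v) ∧ (∀ u u' v, D u v → D u' v → u = u') ∧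
    (∀ u, ¬ D u r)

private lemma chain_aux {n : ℕ} {D : Fin n → Fin n → Prop}
    (hpar : ∀ u u' v, D u v → D u' v → u = u') {u v w : Fin n}
    (hu : Relation.ReflTransGen D u w) :
    Relation.ReflTransGen D v w →
      Relation.ReflTransGen D u v ∨ Relation.ReflTransGen D v u := by
  induction hu with
  | refl => exact fun hv => Or.inr hv
  | @tail b c hub hbc ih =>
    intro hv
    rcases Relation.ReflTransGen.cases_tail hv with rfl | ⟨y, hvy, hyc⟩
    · exact Or.inl (hub.tail hbc)
    · have : y = b := hpar y b c hyc hbc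
      subst this
      exact ih hvy

/-- On a source tree, `s` is a parking function iff for each vertex `u` the number
of drivers preferring the subtree rooted at `u` is at most the size of that subtree. -/
theorem source_tree_parking_function_iff (n m : ℕ) (D : Fin n → Fin n → Prop)
    (r : Fin n) (hT : IsSourceTree D r) (s : Fin m → Fin n) :
    (∃ g : Fin m → Fin n, Function.Injective g ∧
        ∀ i, Relation.ReflTransGen D (s i) (g i)) ↔
      ∀ u : Fin n,
        {i : Fin m | Relation.ReflTransGen D u (s i)}.ncard ≤
          {v : Fin n | Relation.ReflTransGen D u v}.ncard := by
  classical
  obtain ⟨-, hpar, -⟩ := hT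
  constructor
  · rintro ⟨g, hginj, hg⟩ u
    refine Set.ncard_le_ncard_of_injOn g (fun i hi => ?_) (hginj.injOn) (Set.toFinite _)
    exact Relation.ReflTransGen.trans hi (hg i)
  · intro hyp
    -- translate ncard hypothesis to Finset.card
    set Rfin : Fin n → Finset (Fin n) :=
      fun u => Finset.univ.filter (fun v => Relation.ReflTransGen D u v) with hRfin
    have hyp' : ∀ u : Fin n,
        (Finset.univ.filter (fun i : Fin m => Relation.ReflTransGen D u (s i))).card
          ≤ (Rfin u).card := by
      intro u
      have := hyp u
      simpa [Set.ncard_eq_toFinset_card', Set.toFinset_setOf, hRfin] using this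
    -- laminar property
    have lam : ∀ x y : Fin n, ∀ w, w ∈ Rfin x → w ∈ Rfin y →
        Rfin x ⊆ Rfin y ∨ Rfin y ⊆ Rfin x := by
      intro x y w hwx hwy
      simp only [hRfin, Finset.mem_filter] at hwx hwy
      rcases chain_aux hpar hwy.2 hwx.2 with h | h
      · exact Or.inl (fun z hz => by
          simp only [hRfin, Finset.mem_filter, Finset.mem_univ, true_and] at hz ⊢
          exact h.trans hz)
      · exact Or.inr (fun z hz => by
          simp only [hRfin, Finset.mem_filter, Finset.mem_univ, true_and] at hz ⊢
          exact h.trans hz)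
    have self_mem : ∀ x : Fin n, x ∈ Rfin x := by
      intro x; simp only [hRfin, Finset.mem_filter, Finset.mem_univ, true_and]
      exact Relation.ReflTransGen.refl
    -- Hall's condition
    have hall : ∀ A : Finset (Fin m), A.card ≤ (A.biUnion (fun i => Rfin (s i))).card := by
      intro A
      set 𝒮 : Finset (Finset (Fin n)) := A.image (fun i => Rfin (s i)) with h𝒮
      set ℬ : Finset (Finset (Fin n)) :=
        𝒮.filter (fun B => ∀ C ∈ 𝒮, B ⊆ C → B = C) with hℬ
      -- every member of 𝒮 is contained in some member of ℬ
      have exmax : ∀ B ∈ 𝒮, ∃ B' ∈ ℬ, B ⊆ B' := by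
        intro B hB
        obtain ⟨B', hB', hmax⟩ :=
          Finset.exists_maximal (s := 𝒮.filter (fun C => B ⊆ C)) ⟨B, by simp [hB]⟩
        simp only [Finset.mem_filter] at hB'
        refine ⟨B', ?_, hB'.2⟩
        simp only [hℬ, Finset.mem_filter]
        refine ⟨hB'.1, fun C hC hBC => ?_⟩
        by_contra hne
        exact hne (le_antisymm hBC (hmax (Finset.mem_filter.2 ⟨hC, hB'.2.trans hBC⟩)
          hBC))
      -- distinct members of ℬ are disjoint
      have disj : ∀ B ∈ ℬ, ∀ B' ∈ ℬ, B ≠ B' → Disjoint B B' := by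
        intro B hB B' hB' hne
        rw [Finset.disjoint_left]
        intro w hw hw'
        simp only [hℬ, h𝒮, Finset.mem_filter, Finset.mem_image] at hB hB'
        obtain ⟨⟨i, hi, rfl⟩, hBmax⟩ := hB
        obtain ⟨⟨j, hj, rfl⟩, hB'max⟩ := hB'
        rcases lam (s i) (s j) w hw hw' with h | h
        · exact hne (hBmax _ ⟨j, hj, rfl⟩ h)
        · exact hne (hB'max _ ⟨i, hi, rfl⟩ h).symm
      have cover : A ⊆ ℬ.biUnion (fun B => A.filter (fun i => s i ∈ B)) := by
        intro i hi
        obtain ⟨B', hB', hsub⟩ := exmax (Rfin (s i)) (Finset.mem_image.2 ⟨i, hi, rfl⟩)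
        exact Finset.mem_biUnion.2 ⟨B', hB',
          Finset.mem_filter.2 ⟨hi, hsub (self_mem (s i))⟩⟩
      have step2 : ∀ B ∈ ℬ, (A.filter (fun i => s i ∈ B)).card ≤ B.card := by
        intro B hB
        simp only [hℬ, h𝒮, Finset.mem_filter, Finset.mem_image] at hB
        obtain ⟨⟨i, hi, rfl⟩, -⟩ := hB
        calc (A.filter (fun j => s j ∈ Rfin (s i))).card
            ≤ (Finset.univ.filter
                (fun j : Fin m => Relation.ReflTransGen D (s i) (s j))).card := by
              apply Finset.card_le_card
              intro j hj
              simp only [Finset.mem_filter] at hj ⊢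
              refine ⟨Finset.mem_univ _, ?_⟩
              have := hj.2
              simp only [hRfin, Finset.mem_filter, Finset.mem_univ, true_and] at this
              exact this
          _ ≤ (Rfin (s i)).card := hyp' (s i)
      have step4 : ℬ.biUnion id ⊆ A.biUnion (fun i => Rfin (s i)) := by
        intro w hw
        obtain ⟨B, hB, hwB⟩ := Finset.mem_biUnion.1 hw
        simp only [hℬ, h𝒮, Finset.mem_filter, Finset.mem_image] at hB
        obtain ⟨⟨i, hi, rfl⟩, -⟩ := hB
        exact Finset.mem_biUnion.2 ⟨i, hi, hwB⟩
      calc A.card ≤ (ℬ.biUnion (fun B => A.filter (fun i => s i ∈ B))).card :=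
            Finset.card_le_card cover
        _ ≤ ∑ B ∈ ℬ, (A.filter (fun i => s i ∈ B)).card := Finset.card_biUnion_le
        _ ≤ ∑ B ∈ ℬ, B.card := Finset.sum_le_sum step2
        _ = (ℬ.biUnion id).card := (Finset.card_biUnion disj).symm
        _ ≤ (A.biUnion (fun i => Rfin (s i))).card := Finset.card_le_card step4
    obtain ⟨g, hg1, hg2⟩ :=
      (Finset.all_card_le_biUnion_card_iff_exists_injective (fun i => Rfin (s i))).1 hall
    refine ⟨g, hg1, fun i => ?_⟩
    have := hg2 i
    simpa [hRfin] using this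
end

section
/- Let T̃ be a source tree on [n], u a non-root vertex with parent v, and w a vertex reachable from v with w ∉ T̃_u. Let T̃' be the tree obtained from T̃ by removing the edge (v,u) and adding the edge (w,u). Then every parking function s ∈ [n]^m on T̃ is also a parking function on T̃'; in particular P(T̃, m) ≤ P(T̃', m), where P(D,m) counts the parking functions s ∈ [n]^m on D. -/
def IsPF {n m : ℕ} (D : Fin n → Fin n → Prop) (s : Fin m → Fin n) : Prop :=
  ∃ g : Fin m → Fin n, Function.Injective g ∧
    ∀ i, Relation.ReflTransGen D (s i) (g i)

/-- Moving the subtree rooted at `u` from below its parent `v` to below a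
descendant `w` of `v` (with `w` outside the subtree of `u`) cannot decrease the
set of parking functions; in particular `P(T̃,m) ≤ P(T̃',m)`. -/
theorem source_tree_subtree_move (n m : ℕ) (D : Fin n → Fin n → Prop)
    (r u v w : Fin n) (hT : IsSourceTree D r) (hur : u ≠ r) (hvu : D v u)
    (hvw : Relation.ReflTransGen D v w) (hwu : ¬ Relation.ReflTransGen D u w) :
    (∀ s : Fin m → Fin n, IsPF D s →
      IsPF (fun a b => (D a b ∧ ¬(a = v ∧ b = u)) ∨ (a = w ∧ b = u)) s) ∧
    {s : Fin m → Fin n | IsPF D s}.ncard ≤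
      {s : Fin m → Fin n |
        IsPF (fun a b => (D a b ∧ ¬(a = v ∧ b = u)) ∨ (a = w ∧ b = u)) s}.ncard := by
  set D' : Fin n → Fin n → Prop :=
    fun a b => (D a b ∧ ¬(a = v ∧ b = u)) ∨ (a = w ∧ b = u) with hD'
  -- any D-path to w avoids the edge (v,u), hence lifts to D'
  have hvw' : Relation.ReflTransGen D' v w := by
    have : ∀ a, Relation.ReflTransGen D a w → Relation.ReflTransGen D' a w := by
      intro a h
      induction h using Relation.ReflTransGen.head_induction_on with
      | refl => exact Relation.ReflTransGen.refl
      | @head x c hac hcw ih =>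
        refine Relation.ReflTransGen.head ?_ ih
        left
        refine ⟨hac, ?_⟩
        rintro ⟨rfl, rfl⟩
        exact hwu hcw
    exact this v hvw
  have hvu' : Relation.ReflTransGen D' v u :=
    hvw'.tail (Or.inr ⟨rfl, rfl⟩)
  have lift : ∀ a b, Relation.ReflTransGen D a b → Relation.ReflTransGen D' a b := by
    intro a b h
    induction h with
    | refl => exact Relation.ReflTransGen.refl
    | @tail x c _ hbc ih =>
      by_cases hx : x = v ∧ c = u
      · obtain ⟨rfl, rfl⟩ := hx
        exact ih.trans hvu'
      · exact ih.tail (Or.inl ⟨hbc, hx⟩)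
  have main : ∀ s : Fin m → Fin n, IsPF D s → IsPF D' s := by
    rintro s ⟨g, hg, hgs⟩
    exact ⟨g, hg, fun i => lift _ _ (hgs i)⟩
  refine ⟨main, Set.ncard_le_ncard (fun s hs => main s hs) (Set.toFinite _)⟩
end

section
/- For any source tree T̃ on n vertices and 0 ≤ m ≤ n, the number of parking functions satisfies Σ_{i=0}^{m} C(m,i) · (n-1)·(n-2)⋯(n-1-(m-i)+1) ≤ P(T̃, m) ≤ (n - m + 1)(n + 1)^{m-1}, where the lower bound is attained by the star (root with n-1 children) and the upper bound by the directed path. -/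
open Finset

namespace STPark

open scoped Classical

variable {n : ℕ}

/-- reachability in exactly `k` steps -/
def reachIn (D : Fin n → Fin n → Prop) : ℕ → Fin n → Fin n → Prop
  | 0 => fun u v => u = v
  | k+1 => fun u v => ∃ w, reachIn D k u w ∧ D w v

lemma reachIn_of_rtg {D : Fin n → Fin n → Prop} {u v : Fin n}
    (h : Relation.ReflTransGen D u v) : ∃ k, reachIn D k u v := by
  induction h with
  | refl => exact ⟨0, rfl⟩
  | tail _ hedge ih => obtain ⟨k, hk⟩ := ih; exact ⟨k+1, _, hk, hedge⟩

variable (D : Fin n → Fin n → Prop) (r : Fin n) (hT : IsSourceTree D r)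

noncomputable def depth (v : Fin n) : ℕ :=
  letI := Classical.dec
  Nat.find (p := fun k => reachIn D k r v) (reachIn_of_rtg (hT.1 v))

lemma depth_lt {u v : Fin n} (h : D u v) : depth D r hT u < depth D r hT v := by
  classical
  have hv : reachIn D (depth D r hT v) r v := Nat.find_spec (reachIn_of_rtg (hT.1 v))
  rcases hdv : depth D r hT v with _ | k
  · rw [hdv] at hv
    exact absurd (hv ▸ h) (hT.2.2 u)
  · rw [hdv] at hv
    obtain ⟨w, hw, hwv⟩ := hv
    have : w = u := hT.2.1 w u v hwv h
    subst this
    have : depth D r hT w ≤ k := Nat.find_le hw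
    omega

noncomputable def key (v : Fin n) : ℕ := depth D r hT v * n + v.val

lemma key_inj : Function.Injective (key D r hT) := by
  intro u v h
  unfold key at h
  have hu := u.isLt
  have hv := v.isLt
  have key : ∀ d (w : Fin n), (d * n + w.val) % n = w.val := fun d w => by
    rw [mul_comm, Nat.mul_add_mod, Nat.mod_eq_of_lt w.isLt]
  have : u.val = v.val := by
    have h1 : (depth D r hT u * n + u.val) % n = (depth D r hT v * n + v.val) % n := by rw [h]
    rwa [key, key] at h1
  exact Fin.ext this

lemma key_lt {u v : Fin n} (h : D u v) : key D r hT u < key D r hT v := by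
  have := depth_lt D r hT h
  have hu := u.isLt
  unfold key
  nlinarith

lemma key_mono {u v : Fin n} (h : Relation.ReflTransGen D u v) :
    key D r hT u ≤ key D r hT v := by
  induction h with
  | refl => exact le_refl _
  | tail _ hedge ih => exact ih.trans (key_lt D r hT hedge).le

noncomputable def phi (v : Fin n) : Fin n :=
  ⟨(univ.filter fun w => key D r hT w < key D r hT v).card, by
    classical
    have : (univ.filter fun w => key D r hT w < key D r hT v).card ≤ (univ.erase v).card :=
      Finset.card_le_card (fun w hw => by
        simp only [mem_filter, mem_univ, true_and] at hw
        exact Finset.mem_erase.2 ⟨fun hwv => by simp [hwv] at hw, mem_univ _⟩)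
    have h2 : (univ.erase v).card = n - 1 := by
      rw [Finset.card_erase_of_mem (mem_univ _), card_univ, Fintype.card_fin]
    have hn : 0 < n := v.pos
    omega⟩

lemma phi_strict {u v : Fin n} (h : key D r hT u < key D r hT v) :
    phi D r hT u < phi D r hT v := by
  classical
  rw [Fin.lt_def]
  unfold phi
  dsimp only
  apply Finset.card_lt_card
  constructor
  · intro w hw
    simp only [mem_filter, mem_univ, true_and] at hw ⊢
    omega
  · intro hsub
    have := Finset.mem_filter.1 (hsub (Finset.mem_filter.2 ⟨mem_univ u, h⟩))
    omega

lemma phi_inj : Function.Injective (phi D r hT) := by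
  intro u v h
  by_contra hne
  have hk : key D r hT u ≠ key D r hT v := fun he => hne (key_inj D r hT he)
  rcases hk.lt_or_gt with h1 | h1
  · exact absurd h (phi_strict D r hT h1).ne
  · exact absurd h.symm (phi_strict D r hT h1).ne

lemma phi_mono {u v : Fin n} (h : Relation.ReflTransGen D u v) :
    phi D r hT u ≤ phi D r hT v := by
  rcases eq_or_lt_of_le (key_mono D r hT h) with h1 | h1
  · exact le_of_eq (congrArg _ (key_inj D r hT h1))
  · exact (phi_strict D r hT h1).le


variable {m N : ℕ}

noncomputable def Scount (b : Fin m → ZMod N) (x L : ℕ) : ℕ :=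
  (univ.filter fun i => ∃ t < L, b i = ((x + t : ℕ) : ZMod N)).card

lemma Scount_zero (b : Fin m → ZMod N) (x : ℕ) : Scount b x 0 = 0 := by
  simp [Scount]

lemma Scount_mod (b : Fin m → ZMod N) (x L : ℕ) : Scount b (x + N) L = Scount b x L := by
  unfold Scount
  have hc : ∀ t : ℕ, ((x + N + t : ℕ) : ZMod N) = ((x + t : ℕ) : ZMod N) := by
    intro t
    push_cast
    rw [ZMod.natCast_self]
    ring
  congr 1
  apply Finset.filter_congr
  intro i _
  simp only [hc]

lemma Scount_add (b : Fin m → ZMod N) (x L1 L2 : ℕ) (h : L1 + L2 ≤ N) :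
    Scount b x (L1 + L2) = Scount b x L1 + Scount b (x + L1) L2 := by
  unfold Scount
  rw [← Finset.card_union_of_disjoint]
  · congr 1
    ext i
    simp only [mem_union, mem_filter, mem_univ, true_and]
    constructor
    · rintro ⟨t, ht, he⟩
      rcases lt_or_ge t L1 with h1 | h1
      · exact Or.inl ⟨t, h1, he⟩
      · exact Or.inr ⟨t - L1, by omega, by rw [he]; congr 1; omega⟩
    · rintro (⟨t, ht, he⟩ | ⟨t, ht, he⟩)
      · exact ⟨t, by omega, he⟩
      · exact ⟨L1 + t, by omega, by rw [he]; congr 1; omega⟩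
  · rw [Finset.disjoint_filter]
    rintro i _ ⟨t, ht, he⟩ ⟨t', ht', he'⟩
    rw [he] at he'
    have hmod := (ZMod.natCast_eq_natCast_iff _ _ _).1 he'
    have hmod2 : t ≡ L1 + t' [MOD N] := by
      have h1 : x + t = x + t := rfl
      have := Nat.ModEq.add_left_cancel' x (by
        have : x + t ≡ x + (L1 + t') [MOD N] := by
          calc x + t ≡ x + L1 + t' [MOD N] := hmod
            _ = x + (L1 + t') := by ring
        exact this)
      exact this
    rw [Nat.ModEq, Nat.mod_eq_of_lt (by omega), Nat.mod_eq_of_lt (by omega)] at hmod2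
    omega

lemma Scount_full (b : Fin m → ZMod N) (x : ℕ) (hN : 0 < N) : Scount b x N = m := by
  unfold Scount
  have : (univ.filter fun i => ∃ t < N, b i = ((x + t : ℕ) : ZMod N)) = univ := by
    apply Finset.filter_true_of_mem
    intro i _
    haveI : NeZero N := ⟨by omega⟩
    refine ⟨(b i - (x : ℕ)).val, ZMod.val_lt _, ?_⟩
    push_cast
    rw [ZMod.natCast_val, ZMod.cast_id]
    ring
  rw [this, card_univ, Fintype.card_fin]

def Good (b : Fin m → ZMod N) (e : ℕ) : Prop :=
  ∀ L, 1 ≤ L → L ≤ N → Scount b (e + 1 + (N - L)) L + 1 ≤ L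

lemma chain_head_le_getLast : ∀ {tl : List ℕ} {hd : ℕ}, List.Chain (· < ·) hd tl →
    hd ≤ (hd :: tl).getLast (by simp) := by
  intro tl
  induction tl with
  | nil => intro hd _; simp
  | cons h2 tl ih =>
    intro hd h
    rw [List.Chain, List.chain_cons] at h
    have h1 := ih h.2
    rw [List.getLast_cons (by simp)]
    omega

lemma chainlem (b : Fin m → ZMod N) (tl : List ℕ) : ∀ hd, List.Chain (· < ·) hd tl →
    (∀ e ∈ tl, Good b e ∧ e < N) →
    Scount b (hd + 1) ((hd :: tl).getLast (by simp) - hd) + tl.length ≤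
      (hd :: tl).getLast (by simp) - hd := by
  induction tl with
  | nil => intro hd _ _; simp [Scount_zero]
  | cons h2 tl ih =>
    intro hd hch hgood
    rw [List.Chain, List.chain_cons] at hch
    obtain ⟨hlt, hch⟩ := hch
    obtain ⟨hg2, hlt2⟩ := hgood h2 (by simp)
    have hle2 : h2 ≤ (h2 :: tl).getLast (by simp) := chain_head_le_getLast hch
    have hlast_mem : (h2 :: tl).getLast (by simp) ∈ h2 :: tl := List.getLast_mem _
    have hlastN : (h2 :: tl).getLast (by simp) < N := by
      rcases List.mem_cons.1 hlast_mem with h | h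
      · omega
      · exact (hgood _ (by simp [h])).2
    set last := (h2 :: tl).getLast (by simp) with hlastdef
    have hgl : ((hd :: h2 :: tl).getLast (by simp)) = last := by
      rw [List.getLast_cons (by simp)]
    rw [hgl]
    have ihh := ih h2 hch (fun e he => hgood e (by simp [he]))
    rw [← hlastdef] at ihh
    -- split the interval (hd, last] at h2
    have hsplit := Scount_add b (hd + 1) (h2 - hd) (last - h2) (by omega)
    have he1 : (h2 - hd) + (last - h2) = last - hd := by omega
    have he2 : (hd + 1) + (h2 - hd) = h2 + 1 := by omega
    rw [he1, he2] at hsplit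
    -- goodness of h2 on interval (hd, h2]
    have hg := hg2 (h2 - hd) (by omega) (by omega)
    have hstart : h2 + 1 + (N - (h2 - hd)) = (hd + 1) + N := by omega
    rw [hstart, Scount_mod] at hg
    simp only [List.length_cons]
    omega

lemma good_card_le (b : Fin m → ZMod N) (hN : 0 < N) (hmN : m ≤ N) :
    (((Finset.range N).filter (fun e => Good b e)).card) + m ≤ N := by
  set G := (Finset.range N).filter (fun e => Good b e) with hG
  rcases hl : G.sort (· ≤ ·) with _ | ⟨hd, tl⟩
  · have hcard : G.card = 0 := by rw [← Finset.length_sort (· ≤ ·), hl]; rfl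
    omega
  · have hmem : ∀ e ∈ hd :: tl, e ∈ G := by
      intro e he
      rw [← Finset.mem_sort (· ≤ ·), hl]
      exact he
    have hprops : ∀ e ∈ hd :: tl, Good b e ∧ e < N := by
      intro e he
      have h1 := hmem e he
      rw [hG, Finset.mem_filter, Finset.mem_range] at h1
      exact ⟨h1.2, h1.1⟩
    have hsorted : List.Pairwise (· < ·) (hd :: tl) := by
      rw [← hl]; exact (Finset.sortedLT_sort G).pairwise
    have hchain : List.Chain (· < ·) hd tl := List.isChain_iff_pairwise.2 hsorted
    have hcl := chainlem b tl hd hchain (fun e he => hprops e (by simp [he]))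
    set last := (hd :: tl).getLast (by simp) with hlastdef
    have hlast_mem : last ∈ hd :: tl := List.getLast_mem _
    have hlastN : last < N := (hprops _ hlast_mem).2
    have hhdlast : hd ≤ last := chain_head_le_getLast hchain
    have hhdN : hd < N := (hprops hd (by simp)).2
    -- full circle starting at hd+1
    have hfull : Scount b (hd + 1) N = m := Scount_full b _ hN
    have hsplit := Scount_add b (hd + 1) (last - hd) (N - (last - hd)) (by omega)
    have he1 : (last - hd) + (N - (last - hd)) = N := by omega
    have he2 : (hd + 1) + (last - hd) = last + 1 := by omega
    rw [he1, he2] at hsplit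
    -- goodness of hd on the wrap interval ending at hd
    have hg := (hprops hd (by simp)).1 (N - (last - hd)) (by omega) (by omega)
    have hstart : hd + 1 + (N - (N - (last - hd))) = last + 1 := by omega
    rw [hstart] at hg
    have hcard : G.card = tl.length + 1 := by
      rw [← Finset.length_sort (· ≤ ·), hl, List.length_cons]
    omega

variable {n : ℕ}

/-- the parking-style counting condition for sequences with values in `ZMod (n+1)` -/
def CondZ (n : ℕ) {m : ℕ} (a : Fin m → ZMod (n + 1)) : Prop :=
  ∀ k : ℕ, k ≤ n → (univ.filter fun i => k ≤ (a i).val).card ≤ n - k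

lemma cond_good (b : Fin m → ZMod (n + 1)) (c : ZMod (n + 1))
    (h : CondZ n (fun i => b i + c)) : Good b (n - c.val) := by
  haveI : NeZero (n + 1) := ⟨by omega⟩
  intro L hL1 hLN
  have hcval : c.val ≤ n := by have := ZMod.val_lt c; omega
  set k := n + 1 - L with hk
  have hkn : k ≤ n := by omega
  have hcond := h k hkn
  have hfilter : (univ.filter fun i => ∃ t < L, b i = ((n - c.val + 1 + (n + 1 - L) + t : ℕ) : ZMod (n+1)))
      = (univ.filter fun i => k ≤ (b i + c).val) := by
    apply Finset.filter_congr
    intro i _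
    have hcast : ∀ t : ℕ, ((n - c.val + 1 + (n + 1 - L) + t : ℕ) : ZMod (n+1)) =
        ((k + t : ℕ) : ZMod (n+1)) - c := by
      intro t
      have he : n - c.val + 1 + (n + 1 - L) + t = (n + 1 - c.val) + (k + t) := by omega
      rw [he]
      have : ((n + 1 - c.val : ℕ) : ZMod (n+1)) = - c := by
        rw [Nat.cast_sub (by omega), ZMod.natCast_self, ZMod.natCast_val, ZMod.cast_id]
        ring
      push_cast [this]
      ring
    simp only [hcast]
    constructor
    · rintro ⟨t, ht, he⟩
      have heq : b i + c = ((k + t : ℕ) : ZMod (n+1)) := by rw [he]; ring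
      rw [heq, ZMod.val_cast_of_lt (by omega)]
      omega
    · intro hkv
      set w := (b i + c).val with hw
      have hwlt : w < n + 1 := ZMod.val_lt _
      refine ⟨w - k, by omega, ?_⟩
      have h1 : ((k + (w - k) : ℕ) : ZMod (n+1)) = ((w : ℕ) : ZMod (n+1)) := by
        congr 1
        omega
      rw [h1, hw, ZMod.natCast_val, ZMod.cast_id]
      ring
  have hcond' : (univ.filter fun i => k ≤ (b i + c).val).card ≤ n - k := hcond
  unfold Scount
  rw [hfilter]
  omega

lemma goodC_card (hmn : m ≤ n) (b : Fin m → ZMod (n + 1)) :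
    (univ.filter fun c : ZMod (n + 1) => CondZ n (fun i => b i + c)).card ≤ n + 1 - m := by
  haveI : NeZero (n + 1) := ⟨by omega⟩
  have h1 : (univ.filter fun c : ZMod (n + 1) => CondZ n (fun i => b i + c)).card ≤
      ((Finset.range (n+1)).filter (fun e => Good b e)).card := by
    apply Finset.card_le_card_of_injOn (fun c => n - c.val)
    · intro c hc
      rw [Finset.mem_coe, Finset.mem_filter] at hc ⊢
      refine ⟨Finset.mem_range.2 (by beta_reduce; omega), cond_good b c hc.2⟩
    · intro c1 h1 c2 h2 he
      have hv1 : c1.val < n + 1 := ZMod.val_lt _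
      have hv2 : c2.val < n + 1 := ZMod.val_lt _
      have : c1.val = c2.val := by simp only at he; omega
      calc c1 = ((c1.val : ℕ) : ZMod (n+1)) := by rw [ZMod.natCast_val, ZMod.cast_id]
        _ = ((c2.val : ℕ) : ZMod (n+1)) := by rw [this]
        _ = c2 := by rw [ZMod.natCast_val, ZMod.cast_id]
  have h2 := good_card_le b (by omega) (by omega)
  omega

lemma B_card (hm1 : 1 ≤ m) :
    (univ.filter fun b : Fin m → ZMod (n + 1) => b ⟨0, hm1⟩ = 0).card = (n + 1) ^ (m - 1) := by
  haveI : NeZero (n + 1) := ⟨by omega⟩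
  set i0 : Fin m := ⟨0, hm1⟩
  rw [← Fintype.card_subtype]
  have e : {b : Fin m → ZMod (n+1) // b i0 = 0} ≃ ({i : Fin m // i ≠ i0} → ZMod (n+1)) :=
    { toFun := fun b j => b.1 j.1
      invFun := fun g => ⟨fun i => if h : i = i0 then 0 else g ⟨i, h⟩, by simp⟩
      left_inv := fun b => Subtype.ext (funext fun i => by
        dsimp only
        by_cases h : i = i0
        · rw [dif_pos h, h]; exact b.2.symm
        · rw [dif_neg h])
      right_inv := fun g => funext fun j => by dsimp only; rw [dif_neg j.2] }
  rw [Fintype.card_congr e, Fintype.card_fun]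
  congr 1
  · rw [ZMod.card]
  · rw [Fintype.card_subtype_compl, Fintype.card_subtype_eq, Fintype.card_fin]

lemma T_card (hm1 : 1 ≤ m) (hmn : m ≤ n) :
    (univ.filter fun a : Fin m → ZMod (n + 1) => CondZ n a).card ≤
      (n + 1 - m) * (n + 1) ^ (m - 1) := by
  haveI : NeZero (n + 1) := ⟨by omega⟩
  set i0 : Fin m := ⟨0, hm1⟩ with hi0
  set B := univ.filter fun b : Fin m → ZMod (n + 1) => b i0 = 0 with hB
  rw [Finset.card_eq_sum_card_fiberwise
    (f := fun a => fun i => a i - a i0) (t := B) (fun a _ => by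
      rw [hB, Finset.mem_coe, Finset.mem_filter]
      exact ⟨Finset.mem_univ _, by show a i0 - a i0 = 0; exact sub_self _⟩)]
  calc ∑ b ∈ B, ((univ.filter fun a : Fin m → ZMod (n+1) => CondZ n a).filter
        (fun a => (fun i => a i - a i0) = b)).card
      ≤ ∑ _b ∈ B, (n + 1 - m) := by
        apply Finset.sum_le_sum
        intro b _
        have : (((univ.filter fun a : Fin m → ZMod (n+1) => CondZ n a)).filter
            (fun a => (fun i => a i - a i0) = b)).card ≤
            (univ.filter fun c : ZMod (n + 1) => CondZ n (fun i => b i + c)).card := by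
          apply Finset.card_le_card_of_injOn (fun a => a i0)
          · intro a ha
            simp only [Finset.mem_coe, Finset.mem_filter, Finset.mem_univ, true_and] at ha ⊢
            obtain ⟨hc, hfib⟩ := ha
            have hab : (fun i => b i + a i0) = a := by
              funext i
              rw [← hfib]
              ring
            rw [hab]
            exact hc
          · intro a1 ha1 a2 ha2 he
            rw [Finset.mem_coe, Finset.mem_filter] at ha1 ha2
            funext i
            have e1 : a1 i - a1 i0 = b i := congrFun ha1.2 i
            have e2 : a2 i - a2 i0 = b i := congrFun ha2.2 i
            have heq : a1 i0 = a2 i0 := he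
            have h3 : a1 i - a1 i0 = a2 i - a2 i0 := by rw [e1, e2]
            have h4 := sub_eq_sub_iff_add_eq_add.1 h3
            rw [heq] at h4
            exact add_right_cancel h4
        exact this.trans (goodC_card hmn b)
    _ = B.card * (n + 1 - m) := by rw [Finset.sum_const, smul_eq_mul]
    _ = (n + 1 - m) * (n + 1) ^ (m - 1) := by rw [hB, B_card hm1]; ring


section Lower

variable {n m : ℕ} (D : Fin n → Fin n → Prop) (r : Fin n)

/-- the indexing type for the lower bound -/
abbrev PhiT (n m : ℕ) (r : Fin n) :=
  Σ I : Finset (Fin m), ({i : Fin m // i ∉ I} ↪ {v : Fin n // v ≠ r})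

lemma card_PhiT :
    Fintype.card (PhiT n m r) =
      ∑ i ∈ Finset.range (m + 1), m.choose i * (n - 1).descFactorial (m - i) := by
  rw [Fintype.card_sigma]
  have hcard : ∀ I : Finset (Fin m),
      Fintype.card ({i : Fin m // i ∉ I} ↪ {v : Fin n // v ≠ r}) =
        (n - 1).descFactorial (m - I.card) := by
    intro I
    rw [Fintype.card_embedding_eq]
    congr 1
    · rw [Fintype.card_subtype_compl, Fintype.card_subtype_eq, Fintype.card_fin]
    · rw [Fintype.card_subtype_compl, Fintype.card_coe, Fintype.card_fin]
  calc ∑ I : Finset (Fin m), Fintype.card ({i : Fin m // i ∉ I} ↪ {v : Fin n // v ≠ r})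
      = ∑ I : Finset (Fin m), (n - 1).descFactorial (m - I.card) := by
        exact Finset.sum_congr rfl fun I _ => hcard I
    _ = ∑ I ∈ Finset.powerset (univ : Finset (Fin m)), (n - 1).descFactorial (m - I.card) := by
        rw [Finset.powerset_univ]
    _ = ∑ j ∈ Finset.range ((univ : Finset (Fin m)).card + 1),
          ∑ I ∈ Finset.powersetCard j (univ : Finset (Fin m)),
            (n - 1).descFactorial (m - I.card) := by
        rw [Finset.sum_powerset]
    _ = ∑ i ∈ Finset.range (m + 1), m.choose i * (n - 1).descFactorial (m - i) := by
        rw [Finset.card_univ, Fintype.card_fin]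
        apply Finset.sum_congr rfl
        intro j _
        rw [Finset.sum_congr rfl (g := fun I => (n - 1).descFactorial (m - j))
          (fun I hI => by rw [(Finset.mem_powersetCard_univ.1 hI)]),
          Finset.sum_const, Finset.card_powersetCard, Finset.card_univ, Fintype.card_fin,
          smul_eq_mul]

noncomputable def theta (x : PhiT n m r) : Fin m → Fin n :=
  fun i => if h : i ∈ x.1 then r else (x.2 ⟨i, h⟩ : Fin n)

lemma theta_isPF (hT : IsSourceTree D r) (hm : m ≤ n) (x : PhiT n m r) :
    IsPF D (theta r x) := by
  classical
  obtain ⟨I, emb⟩ := x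
  set f : {i : Fin m // i ∉ I} → Fin n := fun j => (emb j : Fin n) with hf
  have hfinj : Function.Injective f := fun j1 j2 h => emb.injective (Subtype.ext h)
  set img := Finset.image f univ with himg
  have himgcard : img.card = m - I.card := by
    rw [himg, Finset.card_image_of_injective _ hfinj, Finset.card_univ,
      Fintype.card_subtype_compl, Fintype.card_coe, Fintype.card_fin]
  have hccard : Fintype.card {v : Fin n // v ∈ imgᶜ} = n - (m - I.card) := by
    rw [Fintype.card_coe, Finset.card_compl, Fintype.card_fin, himgcard]
  have hIle : I.card ≤ m := by
    have := Finset.card_le_univ I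
    rwa [Fintype.card_fin] at this
  have hle : Fintype.card {i : Fin m // i ∈ I} ≤ Fintype.card {v : Fin n // v ∈ imgᶜ} := by
    rw [Fintype.card_coe, hccard]
    have hmn : m ≤ n := hm
    omega
  obtain ⟨e⟩ := Function.Embedding.nonempty_of_card_le hle
  refine ⟨fun i => if h : i ∈ I then (e ⟨i, h⟩ : Fin n) else f ⟨i, h⟩, ?_, ?_⟩
  · intro i1 i2 h
    dsimp only at h
    by_cases h1 : i1 ∈ I <;> by_cases h2 : i2 ∈ I
    · rw [dif_pos h1, dif_pos h2] at h
      have := e.injective (Subtype.ext h)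
      exact Subtype.ext_iff.1 this
    · rw [dif_pos h1, dif_neg h2] at h
      exfalso
      have hc : (e ⟨i1, h1⟩ : Fin n) ∈ imgᶜ := (e ⟨i1, h1⟩).2
      have hm2 : f ⟨i2, h2⟩ ∈ img := by
        rw [himg]; exact Finset.mem_image_of_mem f (Finset.mem_univ _)
      rw [h] at hc
      exact (Finset.mem_compl.1 hc) hm2
    · rw [dif_neg h1, dif_pos h2] at h
      exfalso
      have hc : (e ⟨i2, h2⟩ : Fin n) ∈ imgᶜ := (e ⟨i2, h2⟩).2
      have hm2 : f ⟨i1, h1⟩ ∈ img := by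
        rw [himg]; exact Finset.mem_image_of_mem f (Finset.mem_univ _)
      rw [← h] at hc
      exact (Finset.mem_compl.1 hc) hm2
    · rw [dif_neg h1, dif_neg h2] at h
      exact Subtype.ext_iff.1 (hfinj h)
  · intro i
    dsimp only
    by_cases h : i ∈ I
    · have hs : theta r ⟨I, emb⟩ i = r := by unfold theta; rw [dif_pos h]
      rw [hs, dif_pos h]
      exact hT.1 _
    · have hs : theta r ⟨I, emb⟩ i = f ⟨i, h⟩ := by unfold theta; rw [dif_neg h]
      rw [hs, dif_neg h]

lemma theta_inj : Function.Injective (theta r (m := m)) := by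
  rintro ⟨I, emb⟩ ⟨I', emb'⟩ h
  have hIeq : I = I' := by
    ext i
    constructor
    · intro hi
      by_contra hi'
      have h1 : theta r ⟨I, emb⟩ i = r := by unfold theta; rw [dif_pos hi]
      have h2 : theta r ⟨I', emb'⟩ i = (emb' ⟨i, hi'⟩ : Fin n) := by
        unfold theta; rw [dif_neg hi']
      rw [h, h2] at h1
      exact (emb' ⟨i, hi'⟩).2 h1
    · intro hi
      by_contra hi'
      have h1 : theta r ⟨I', emb'⟩ i = r := by unfold theta; rw [dif_pos hi]
      have h2 : theta r ⟨I, emb⟩ i = (emb ⟨i, hi'⟩ : Fin n) := by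
        unfold theta; rw [dif_neg hi']
      rw [← h, h2] at h1
      exact (emb ⟨i, hi'⟩).2 h1
  subst hIeq
  have hembeq : emb = emb' := by
    refine Function.Embedding.ext fun j => Subtype.ext ?_
    have h1 : theta r ⟨I, emb⟩ j.1 = (emb j : Fin n) := by
      unfold theta; rw [dif_neg j.2]
    have h2 : theta r ⟨I, emb'⟩ j.1 = (emb' j : Fin n) := by
      unfold theta; rw [dif_neg j.2]
    rw [h, h2] at h1
    exact h1.symm
  rw [hembeq]

end Lower

section Upper

variable {n m : ℕ} (D : Fin n → Fin n → Prop) (r : Fin n)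

lemma fin_filter_ge_card (k : ℕ) : (univ.filter fun v : Fin n => k ≤ v.val).card ≤ n - k := by
  have h1 : ((Finset.range (n - k)).card) = n - k := Finset.card_range _
  rw [← h1]
  apply Finset.card_le_card_of_injOn (fun v => v.val - k)
  · intro v hv
    rw [Finset.mem_coe, Finset.mem_filter] at hv
    rw [Finset.mem_coe, Finset.mem_range]
    have := v.isLt
    beta_reduce
    omega
  · intro v1 h1 v2 h2 he
    rw [Finset.mem_coe, Finset.mem_filter] at h1 h2
    simp only at he
    exact Fin.ext (by omega)

lemma upper_main (hT : IsSourceTree D r) (hm1 : 1 ≤ m) (hmn : m ≤ n) :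
    Nat.card {s : Fin m → Fin n // IsPF D s} ≤ (n + 1 - m) * (n + 1) ^ (m - 1) := by
  set φ := phi D r hT with hφ
  have hstep : ∀ s : Fin m → Fin n, IsPF D s →
      CondZ n (fun i => (((φ (s i)).val : ℕ) : ZMod (n + 1))) := by
    rintro s ⟨g, hginj, hreach⟩ k hk
    have hval : ∀ i : Fin m, ((((φ (s i)).val : ℕ) : ZMod (n + 1))).val = (φ (s i)).val :=
      fun i => ZMod.val_cast_of_lt (by have := (φ (s i)).isLt; omega)
    have he : (univ.filter fun i : Fin m => k ≤ ((((φ (s i)).val : ℕ) : ZMod (n + 1))).val) =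
        (univ.filter fun i : Fin m => k ≤ (φ (s i)).val) :=
      Finset.filter_congr fun i _ => by rw [hval i]
    have hcc : (univ.filter fun i : Fin m => k ≤ (φ (s i)).val).card ≤
        (univ.filter fun v : Fin n => k ≤ v.val).card := by
      apply Finset.card_le_card_of_injOn (fun i => φ (g i))
      · intro i hi
        rw [Finset.mem_coe, Finset.mem_filter] at hi ⊢
        refine ⟨Finset.mem_univ _, ?_⟩
        have hmono : φ (s i) ≤ φ (g i) := phi_mono D r hT (hreach i)
        have := Fin.le_def.1 hmono
        beta_reduce
        omega
      · intro i1 _ i2 _ he2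
        exact hginj (phi_inj D r hT he2)
    calc (univ.filter fun i : Fin m => k ≤ ((((φ (s i)).val : ℕ) : ZMod (n + 1))).val).card
        = (univ.filter fun i : Fin m => k ≤ (φ (s i)).val).card := by rw [he]
      _ ≤ (univ.filter fun v : Fin n => k ≤ v.val).card := hcc
      _ ≤ n - k := fin_filter_ge_card k
  have hinj : Function.Injective
      (fun x : {s : Fin m → Fin n // IsPF D s} =>
        (⟨fun i => (((φ (x.1 i)).val : ℕ) : ZMod (n + 1)), hstep x.1 x.2⟩ :
          {a : Fin m → ZMod (n + 1) // CondZ n a})) := by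
    intro x y hxy
    have h1 := congrArg Subtype.val hxy
    apply Subtype.ext
    funext i
    have h2 : (((φ (x.1 i)).val : ℕ) : ZMod (n + 1)) = (((φ (y.1 i)).val : ℕ) : ZMod (n + 1)) :=
      congrFun h1 i
    have h3 : (φ (x.1 i)).val = (φ (y.1 i)).val := by
      have hx : ((((φ (x.1 i)).val : ℕ) : ZMod (n + 1))).val = (φ (x.1 i)).val :=
        ZMod.val_cast_of_lt (by have := (φ (x.1 i)).isLt; omega)
      have hy : ((((φ (y.1 i)).val : ℕ) : ZMod (n + 1))).val = (φ (y.1 i)).val :=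
        ZMod.val_cast_of_lt (by have := (φ (y.1 i)).isLt; omega)
      rw [← hx, ← hy, h2]
    exact phi_inj D r hT (Fin.ext h3)
  calc Nat.card {s : Fin m → Fin n // IsPF D s}
      ≤ Nat.card {a : Fin m → ZMod (n + 1) // CondZ n a} :=
        Nat.card_le_card_of_injective _ hinj
    _ = (univ.filter fun a : Fin m → ZMod (n + 1) => CondZ n a).card := by
        rw [Nat.card_eq_fintype_card, Fintype.card_subtype]
    _ ≤ (n + 1 - m) * (n + 1) ^ (m - 1) := T_card hm1 hmn

end Upper

end STPark

/-- Extremal bounds on the number of `(n,m)`-parking functions on a source tree: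
the star gives the lower bound and the path the upper bound. -/
theorem source_tree_parking_count_bounds (n m : ℕ) (hm : m ≤ n)
    (D : Fin n → Fin n → Prop) (r : Fin n) (hT : IsSourceTree D r) :
    (∑ i ∈ Finset.range (m + 1), m.choose i * (n - 1).descFactorial (m - i)) ≤
        {s : Fin m → Fin n | IsPF D s}.ncard ∧
      {s : Fin m → Fin n | IsPF D s}.ncard ≤ (n - m + 1) * (n + 1) ^ (m - 1) := by
  classical
  have hncard : {s : Fin m → Fin n | IsPF D s}.ncard = Nat.card {s : Fin m → Fin n // IsPF D s} :=
    (Nat.card_coe_set_eq _).symm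
  constructor
  · -- lower bound
    have hinj : Function.Injective
        (fun x : STPark.PhiT n m r =>
          (⟨STPark.theta r x, STPark.theta_isPF D r hT hm x⟩ : {s : Fin m → Fin n // IsPF D s})) := by
      intro x y hxy
      exact STPark.theta_inj r (congrArg Subtype.val hxy)
    have h1 : Nat.card (STPark.PhiT n m r) ≤ Nat.card {s : Fin m → Fin n // IsPF D s} :=
      Nat.card_le_card_of_injective _ hinj
    rw [Nat.card_eq_fintype_card, STPark.card_PhiT (n := n) (m := m) r] at h1
    rw [hncard]
    exact h1
  · -- upper bound
    rw [hncard]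
    rcases Nat.eq_zero_or_pos m with hm0 | hm1
    · subst hm0
      have h1 : Nat.card {s : Fin 0 → Fin n // IsPF D s} ≤ Nat.card (Fin 0 → Fin n) :=
        Nat.card_le_card_of_injective Subtype.val Subtype.val_injective
      have h2 : Nat.card (Fin 0 → Fin n) = 1 := by
        rw [Nat.card_eq_fintype_card, Fintype.card_fun]
        simp
      have h3 : (n - 0 + 1) * (n + 1) ^ (0 - 1) = n + 1 := by norm_num
      rw [h3]
      omega
    · have := STPark.upper_main D r hT hm1 hm
      have he : n + 1 - m = n - m + 1 := by omega
      rw [he] at this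
      exact this
end

section
/- On a directed path (vertices 1,…,n with edges i → i+1), the number of parking functions s ∈ [n]^m equals the number of classical (n,m)-parking functions, namely (n - m + 1)(n + 1)^{m - 1} for m ≥ 1. -/
open Finset

namespace PPC

/-- Number of indices `j` with `s j = v`. -/
def ctf {m N : ℕ} (s : Fin m → ZMod N) (v : ZMod N) : ℕ :=
  (Finset.univ.filter (fun j => s j = v)).card

/-- `v` is an "empty spot" for the counting function `c` (circular Hall condition). -/
def Empt (N : ℕ) (c : ZMod N → ℕ) (v : ZMod N) : Prop :=
  ∀ k < N, ∑ t ∈ Finset.range (k + 1), c (v - (t : ℕ)) ≤ k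

/-- The classical Hall-type parking condition. -/
def HallC (n : ℕ) {m : ℕ} (s : Fin m → Fin n) : Prop :=
  ∀ i ≤ n, (Finset.univ.filter (fun j => i ≤ (s j).val)).card ≤ n - i

instance {N : ℕ} (c : ZMod N → ℕ) : DecidablePred (Empt N c) := fun _ => by
  unfold Empt; infer_instance

instance {n m : ℕ} : DecidablePred (HallC n (m := m)) := fun _ => by
  unfold HallC; infer_instance

lemma sum_ctf {m N : ℕ} [NeZero N] (s : Fin m → ZMod N) : ∑ v, ctf s v = m := by
  have h := Finset.card_eq_sum_card_fiberwise (f := s) (s := Finset.univ)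
    (t := Finset.univ) (fun x _ => mem_univ _)
  simpa [ctf] using h.symm

/-- Key counting lemma: the number of empty spots is `N - m`. -/
lemma empt_card {N m : ℕ} [NeZero N] (hmN : m < N) (c : ZMod N → ℕ)
    (hc : ∑ v, c v = m) :
    (Finset.univ.filter (fun v => Empt N c v)).card = N - m := by
  classical
  have hNpos : 0 < N := Nat.pos_of_ne_zero (NeZero.ne N)
  set A : ℕ → ℕ := fun x => ∑ i ∈ Finset.range x, c (-(i : ℕ)) with hA
  set G : ℕ → ℤ := fun x => (A x : ℤ) - x with hG
  -- sums over a full cycle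
  have hcyc : ∀ x : ℕ, ∑ i ∈ Finset.range N, c (-((x + i : ℕ) : ZMod N)) = m := by
    intro x
    rw [← hc]
    refine Finset.sum_nbij' (i := fun i => (-((x + i : ℕ) : ZMod N)))
      (j := fun v => (-v - (x : ℕ) : ZMod N).val) (fun a _ => mem_univ _)
      (fun v _ => mem_range.mpr (ZMod.val_lt _)) ?_ ?_ (fun a _ => rfl)
    · intro a ha
      have ha' : a < N := mem_range.mp ha
      show (-(-((x + a : ℕ) : ZMod N)) - (x : ℕ)).val = a
      have : (-(-((x + a : ℕ) : ZMod N)) - (x : ℕ)) = ((a : ℕ) : ZMod N) := by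
        push_cast
        ring
      rw [this, ZMod.val_cast_of_lt ha']
    · intro v _
      show -(((x + (-v - (x : ℕ) : ZMod N).val : ℕ) : ℕ) : ZMod N) = v
      push_cast
      rw [ZMod.natCast_rightInverse _]
      ring
  have hA_add : ∀ u k : ℕ, A (u + k) = A u + ∑ t ∈ Finset.range k, c (-((u + t : ℕ))) := by
    intro u k
    simp only [hA]
    rw [Finset.sum_range_add]
  have hGper : ∀ x : ℕ, G (x + N) = G x + m - N := by
    intro x
    simp only [hG, hA_add x N, hcyc x]
    push_cast
    ring
  have hGstep : ∀ x : ℕ, G x - 1 ≤ G (x + 1) := by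
    intro x
    have h : A x ≤ A (x + 1) := by
      rw [hA_add x 1]; exact Nat.le_add_right _ _
    simp only [hG]
    omega
  have hNe : (Finset.range N).Nonempty := nonempty_range_iff.mpr (by omega)
  set F : ℕ → ℤ := fun u => (Finset.range N).sup' hNe (fun i => G (u + i)) with hF
  have hGF : ∀ u i : ℕ, i < N → G (u + i) ≤ F u := fun u i hi =>
    Finset.le_sup' (f := fun i => G (u + i)) (mem_range.mpr hi)
  have hFG : ∀ u, G u ≤ F u := by
    intro u
    simpa using hGF u 0 hNpos
  have hFmem : ∀ u : ℕ, ∃ i < N, F u = G (u + i) := by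
    intro u
    obtain ⟨i, hi, hEq⟩ := Finset.exists_mem_eq_sup' hNe (fun i => G (u + i))
    exact ⟨i, mem_range.mp hi, hEq⟩
  have hmN' : (m : ℤ) - N ≤ 0 := by
    have : (m : ℤ) < N := by exact_mod_cast hmN
    omega
  have hFstep1 : ∀ u, F (u + 1) ≤ F u := by
    intro u
    apply Finset.sup'_le
    intro i hi
    have hi' : i < N := mem_range.mp hi
    by_cases h : i + 1 < N
    · have := hGF u (i + 1) h
      rwa [show u + 1 + i = u + (i + 1) by omega]
    · have hiN : i + 1 = N := by omega
      rw [show u + 1 + i = u + N by omega, hGper u]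
      have := hFG u
      omega
  have hFstep2 : ∀ u, F u ≤ F (u + 1) + 1 := by
    intro u
    apply Finset.sup'_le
    intro i hi
    have hi' : i < N := mem_range.mp hi
    rcases Nat.eq_zero_or_pos i with rfl | hipos
    · have h1 := hGstep u
      have h2 := hGF (u + 1) 0 hNpos
      simp only [Nat.add_zero] at h2 ⊢
      omega
    · have : i - 1 < N := by omega
      have h2 := hGF (u + 1) (i - 1) this
      rw [show u + 1 + (i - 1) = u + i by omega] at h2
      exact h2.trans (by linarith)
  have hFper : F N = F 0 + m - N := by
    apply le_antisymm
    · apply Finset.sup'_le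
      intro i hi
      have hi' : i < N := mem_range.mp hi
      rw [show N + i = i + N by omega, hGper i]
      have := hGF 0 i hi'
      rw [Nat.zero_add] at this
      omega
    · obtain ⟨i, hi, hEq⟩ := hFmem 0
      have h1 := hGF N i hi
      rw [show N + i = i + N by omega, hGper i] at h1
      rw [Nat.zero_add] at hEq
      omega
  -- the record property
  have hPF : ∀ u : ℕ, (∀ k < N, G (u + (k + 1)) < G u) ↔ F (u + 1) < G u := by
    intro u
    constructor
    · intro h
      rw [hF]
      rw [Finset.sup'_lt_iff]
      intro i hi
      have := h i (mem_range.mp hi)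
      rwa [show u + (i + 1) = u + 1 + i by omega] at this
    · intro h k hk
      have := hGF (u + 1) k hk
      rw [show u + 1 + k = u + (k + 1) by omega] at this
      omega
  have hPF2 : ∀ u : ℕ, F (u + 1) < G u ↔ F u = F (u + 1) + 1 := by
    intro u
    constructor
    · intro h
      have h1 := hFG u
      have h2 := hFstep2 u
      have h3 := hFstep1 u
      omega
    · intro h
      obtain ⟨i, hi, hEq⟩ := hFmem u
      rcases Nat.eq_zero_or_pos i with rfl | hipos
      · rw [Nat.add_zero] at hEq
        omega
      · exfalso
        have : i - 1 < N := by omega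
        have h2 := hGF (u + 1) (i - 1) this
        rw [show u + 1 + (i - 1) = u + i by omega] at h2
        omega
  -- telescoping count
  have htel : ∑ u ∈ Finset.range N, (F u - F (u + 1)) = F 0 - F N :=
    Finset.sum_range_sub' F N
  have hkey : (((Finset.range N).filter (fun u => F (u + 1) < G u)).card : ℤ)
      = (N : ℤ) - m := by
    have h1 : (((Finset.range N).filter (fun u => F (u + 1) < G u)).card : ℤ)
        = ∑ u ∈ Finset.range N, (if F (u + 1) < G u then (1 : ℤ) else 0) := by
      rw [Finset.card_filter]
      push_cast
      rfl
    rw [h1]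
    have h2 : ∀ u ∈ Finset.range N,
        (if F (u + 1) < G u then (1 : ℤ) else 0) = F u - F (u + 1) := by
      intro u _
      by_cases h : F (u + 1) < G u
      · rw [if_pos h]
        have := (hPF2 u).mp h
        omega
      · rw [if_neg h]
        have hne : ¬(F u = F (u + 1) + 1) := fun he => h ((hPF2 u).mpr he)
        have h1' := hFstep1 u
        have h2' := hFstep2 u
        omega
    rw [Finset.sum_congr rfl h2, htel, hFper]
    ring
  -- translate between `ZMod N` spots and `range N`
  have hEm : ∀ u : ℕ, Empt N c (-(u : ZMod N)) ↔ ∀ k < N, G (u + (k + 1)) < G u := by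
    intro u
    unfold Empt
    apply forall_congr'
    intro k
    apply imp_congr_right
    intro _
    have hsum : ∑ t ∈ Finset.range (k + 1), c (-(u : ZMod N) - (t : ℕ))
        = ∑ t ∈ Finset.range (k + 1), c (-((u + t : ℕ))) := by
      apply Finset.sum_congr rfl
      intro t _
      congr 1
      push_cast
      ring
    rw [hsum]
    have hAs := hA_add u (k + 1)
    constructor
    · intro h
      simp only [hG]
      omega
    · intro h
      simp only [hG] at h
      omega
  have hbij : (Finset.univ.filter (fun v => Empt N c v)).card
      = ((Finset.range N).filter (fun u => F (u + 1) < G u)).card := by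
    refine Finset.card_nbij' (i := fun v => (-v).val) (j := fun u => -((u : ℕ) : ZMod N))
      ?_ ?_ ?_ ?_
    · intro v hv
      rw [Finset.mem_coe, Finset.mem_filter] at hv
      rw [Finset.mem_coe, Finset.mem_filter]
      refine ⟨mem_range.mpr (ZMod.val_lt _), ?_⟩
      rw [← hPF]
      rw [← hEm]
      have : -(((-v).val : ℕ) : ZMod N) = v := by
        rw [ZMod.natCast_rightInverse _]
        ring
      rw [this]
      exact hv.2
    · intro u hu
      rw [Finset.mem_coe, Finset.mem_filter] at hu
      rw [Finset.mem_coe, Finset.mem_filter]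
      refine ⟨mem_univ _, ?_⟩
      rw [hEm]
      rw [hPF]
      have hu' : u < N := mem_range.mp (hu.1)
      exact hu.2
    · intro v _
      show -(((-v).val : ℕ) : ZMod N) = v
      rw [ZMod.natCast_rightInverse _]
      ring
    · intro u hu
      have hu' : u < N := mem_range.mp (Finset.mem_filter.mp hu).1
      show (-(-((u : ℕ) : ZMod N))).val = u
      rw [neg_neg, ZMod.val_cast_of_lt hu']
  rw [hbij]
  omega


/-- Reachability in the directed path is just `≤` on values. -/
lemma reach_iff {n : ℕ} (a b : Fin n) :
    Relation.ReflTransGen (fun a b : Fin n => b.val = a.val + 1) a b ↔ a.val ≤ b.val := by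
  constructor
  · intro h
    induction h with
    | refl => omega
    | tail _ hstep ih => omega
  · intro h
    obtain ⟨k, hk⟩ : ∃ k, b.val = a.val + k := ⟨b.val - a.val, by omega⟩
    clear h
    induction k generalizing b with
    | zero =>
      have : a = b := Fin.ext (by omega)
      subst this
      exact Relation.ReflTransGen.refl
    | succ k ih =>
      have hb : a.val + k < n := by have := b.isLt; omega
      exact Relation.ReflTransGen.tail (ih ⟨a.val + k, hb⟩ rfl) (by simp [hk]; omega)

lemma card_ge (n i : ℕ) :
    (Finset.univ.filter (fun v : Fin n => i ≤ v.val)).card = n - i := by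
  rw [show n - i = (Finset.Ico i n).card by rw [Nat.card_Ico]]
  refine Finset.card_nbij (i := fun v => v.val) ?_ ?_ ?_
  · intro v hv
    rw [Finset.mem_coe, Finset.mem_filter] at hv
    exact Finset.mem_Ico.mpr ⟨hv.2, v.isLt⟩
  · intro v hv w hw hvw
    exact Fin.ext hvw
  · intro a ha
    rw [Finset.coe_Ico, Set.mem_Ico] at ha
    exact ⟨⟨a, ha.2⟩, by simp [Finset.mem_coe, Finset.mem_filter, ha.1], rfl⟩

lemma ispf_iff_hall {n m : ℕ} (s : Fin m → Fin n) :
    IsPF (fun a b : Fin n => b.val = a.val + 1) s ↔ HallC n s := by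
  constructor
  · rintro ⟨g, hginj, hgle⟩ i hi
    have hle : ∀ j, (s j).val ≤ (g j).val := fun j => (reach_iff _ _).mp (hgle j)
    calc (Finset.univ.filter (fun j => i ≤ (s j).val)).card
        ≤ (Finset.univ.filter (fun v : Fin n => i ≤ v.val)).card := by
          refine Finset.card_le_card_of_injOn g ?_ hginj.injOn
          intro j hj
          rw [Finset.mem_coe, Finset.mem_filter] at hj
          rw [Finset.mem_coe, Finset.mem_filter]
          exact ⟨mem_univ _, le_trans hj.2 (hle j)⟩
      _ = n - i := card_ge n i
  · intro hH
    have hall : ∀ J : Finset (Fin m), J.card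
        ≤ (J.biUnion (fun j => Finset.univ.filter (fun v : Fin n => (s j).val ≤ v.val))).card := by
      intro J
      rcases J.eq_empty_or_nonempty with rfl | hJ
      · simp
      · have hJim : (J.image (fun j => (s j).val)).Nonempty := hJ.image _
        set a := (J.image (fun j => (s j).val)).min' hJim with ha
        obtain ⟨j0, hj0J, hj0⟩ : ∃ j0 ∈ J, (s j0).val = a := by
          have := Finset.min'_mem _ hJim
          rw [Finset.mem_image] at this
          obtain ⟨j0, h1, h2⟩ := this
          exact ⟨j0, h1, h2⟩
        have hsub : Finset.univ.filter (fun v : Fin n => (s j0).val ≤ v.val)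
            ⊆ J.biUnion (fun j => Finset.univ.filter (fun v : Fin n => (s j).val ≤ v.val)) :=
          fun v hv => Finset.mem_biUnion.mpr ⟨j0, hj0J, hv⟩
        have h1 : J.card ≤ (Finset.univ.filter (fun j => a ≤ (s j).val)).card := by
          apply Finset.card_le_card
          intro j hjJ
          rw [Finset.mem_filter]
          exact ⟨mem_univ _, Finset.min'_le _ _ (Finset.mem_image_of_mem _ hjJ)⟩
        have h2 := hH a (by rw [← hj0]; exact le_of_lt (s j0).isLt)
        have h3 : (Finset.univ.filter (fun v : Fin n => (s j0).val ≤ v.val)).card = n - a := by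
          rw [hj0, card_ge]
        calc J.card ≤ n - a := le_trans h1 h2
          _ = (Finset.univ.filter (fun v : Fin n => (s j0).val ≤ v.val)).card := h3.symm
          _ ≤ _ := Finset.card_le_card hsub
    obtain ⟨g, hginj, hmem⟩ := (Finset.all_card_le_biUnion_card_iff_exists_injective
        (fun j : Fin m => Finset.univ.filter (fun v : Fin n => (s j).val ≤ v.val))).mp hall
    refine ⟨g, hginj, fun j => (reach_iff _ _).mpr ?_⟩
    have := hmem j
    rw [Finset.mem_filter] at this
    exact this.2


lemma empt_shift {N m : ℕ} [NeZero N] (s : Fin m → ZMod N) (d v : ZMod N) :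
    Empt N (ctf (fun j => s j + d)) (v + d) ↔ Empt N (ctf s) v := by
  have hc : ∀ w : ZMod N, ctf (fun j => s j + d) (w + d) = ctf s w := by
    intro w
    unfold ctf
    congr 1
    apply Finset.filter_congr
    intro j _
    simp only [add_left_inj]
  unfold Empt
  apply forall_congr'
  intro k
  apply imp_congr_right
  intro _
  have hsum : ∀ t : ℕ, ctf (fun j => s j + d) (v + d - (t : ℕ))
      = ctf s (v - (t : ℕ)) := by
    intro t
    rw [show v + d - (t : ℕ) = (v - (t : ℕ)) + d by ring, hc]
  simp_rw [hsum]

lemma zmod_count {N m : ℕ} [NeZero N] (hm1 : 1 ≤ m) (hmN : m < N) (v0 : ZMod N) :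
    (Finset.univ.filter (fun s : Fin m → ZMod N => Empt N (ctf s) v0)).card
      = (N - m) * N ^ (m - 1) := by
  classical
  have hNpos : 0 < N := Nat.pos_of_ne_zero (NeZero.ne N)
  have hfib : ∀ v : ZMod N,
      (Finset.univ.filter (fun s : Fin m → ZMod N => Empt N (ctf s) v)).card
        = (Finset.univ.filter (fun s : Fin m → ZMod N => Empt N (ctf s) v0)).card := by
    intro v
    refine Finset.card_nbij' (i := fun s => fun j => s j + (v0 - v))
      (j := fun s => fun j => s j + (v - v0)) ?_ ?_ ?_ ?_
    · intro s hs
      rw [Finset.mem_coe, Finset.mem_filter] at hs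
      rw [Finset.mem_coe, Finset.mem_filter]
      refine ⟨mem_univ _, ?_⟩
      have := (empt_shift s (v0 - v) v).mpr hs.2
      rwa [show v + (v0 - v) = v0 by ring] at this
    · intro s hs
      rw [Finset.mem_coe, Finset.mem_filter] at hs
      rw [Finset.mem_coe, Finset.mem_filter]
      refine ⟨mem_univ _, ?_⟩
      have := (empt_shift s (v - v0) v0).mpr hs.2
      rwa [show v0 + (v - v0) = v by ring] at this
    · intro s _
      funext j
      show s j + (v0 - v) + (v - v0) = s j
      ring
    · intro s _
      funext j
      show s j + (v - v0) + (v0 - v) = s j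
      ring
  have hdouble :
      (Finset.univ.filter (fun s : Fin m → ZMod N => Empt N (ctf s) v0)).card * N
        = (N - m) * N ^ m := by
    calc (Finset.univ.filter (fun s : Fin m → ZMod N => Empt N (ctf s) v0)).card * N
        = ∑ v : ZMod N,
            (Finset.univ.filter (fun s : Fin m → ZMod N => Empt N (ctf s) v)).card := by
          rw [Finset.sum_congr rfl (fun v _ => hfib v)]
          simp [Finset.card_univ, ZMod.card, mul_comm]
      _ = ∑ v : ZMod N, ∑ s : Fin m → ZMod N, (if Empt N (ctf s) v then 1 else 0) := by
          apply Finset.sum_congr rfl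
          intro v _
          rw [Finset.card_filter]
      _ = ∑ s : Fin m → ZMod N, ∑ v : ZMod N, (if Empt N (ctf s) v then 1 else 0) :=
          Finset.sum_comm
      _ = ∑ s : Fin m → ZMod N, (N - m) := by
          apply Finset.sum_congr rfl
          intro s _
          rw [← Finset.card_filter]
          exact empt_card hmN (ctf s) (sum_ctf s)
      _ = (N - m) * N ^ m := by
          rw [Finset.sum_const, Finset.card_univ, Fintype.card_fun]
          simp [mul_comm, ZMod.card]
  have hpow : N ^ m = N ^ (m - 1) * N := by
    rw [← pow_succ]
    congr 1
    omega
  apply Nat.eq_of_mul_eq_mul_right hNpos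
  rw [hdouble, hpow]
  ring

lemma natCast_zmod_inj {N a b : ℕ} (ha : a < N) (hb : b < N)
    (h : ((a : ℕ) : ZMod N) = ((b : ℕ) : ZMod N)) : a = b := by
  have : NeZero N := ⟨by omega⟩
  have := congrArg ZMod.val h
  rwa [ZMod.val_cast_of_lt ha, ZMod.val_cast_of_lt hb] at this

lemma hall_iff_empt {n m : ℕ} (s : Fin m → Fin n) :
    HallC n s ↔ Empt (n + 1) (ctf (fun j => (((s j).val : ℕ) : ZMod (n + 1))))
      ((n : ℕ) : ZMod (n + 1)) := by
  set N := n + 1 with hN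
  set t : Fin m → ZMod N := fun j => (((s j).val : ℕ) : ZMod N) with ht
  have hctf : ∀ a : ℕ, a < N →
      ctf t ((a : ℕ) : ZMod N) = (Finset.univ.filter (fun j => (s j).val = a)).card := by
    intro a haN
    unfold ctf
    congr 1
    apply Finset.filter_congr
    intro j _
    simp only [ht]
    constructor
    · intro h
      exact natCast_zmod_inj (lt_trans (s j).isLt (by omega)) haN h
    · intro h
      rw [h]
  have hsum : ∀ k ≤ n,
      ∑ t' ∈ Finset.range (k + 1), ctf t (((n : ℕ) : ZMod N) - (t' : ℕ))
        = (Finset.univ.filter (fun j => n - k ≤ (s j).val)).card := by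
    intro k hk
    have hterm : ∀ t' : ℕ, t' ≤ k →
        ctf t (((n : ℕ) : ZMod N) - (t' : ℕ))
          = (Finset.univ.filter (fun j => (s j).val = n - t')).card := by
      intro t' ht'
      have : ((n : ℕ) : ZMod N) - (t' : ℕ) = (((n - t' : ℕ) : ℕ) : ZMod N) := by
        have : t' ≤ n := le_trans ht' hk
        push_cast [Nat.cast_sub this]
        ring
      rw [this, hctf (n - t') (by omega)]
    rw [Finset.card_eq_sum_card_fiberwise
      (f := fun j => n - (s j).val) (t := Finset.range (k + 1)) ?_]
    · apply Finset.sum_congr rfl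
      intro t' ht'
      rw [hterm t' (by exact Nat.lt_succ_iff.mp (mem_range.mp ht'))]
      congr 1
      rw [Finset.filter_filter]
      apply Finset.filter_congr
      intro j _
      have h1 : (s j).val < n := (s j).isLt
      have h2 : t' < k + 1 := mem_range.mp ht'
      constructor
      · intro h
        constructor <;> omega
      · intro ⟨hge, heq⟩
        omega
    · intro j hj
      rw [Finset.mem_coe, Finset.mem_filter] at hj
      have h1 : (s j).val < n := (s j).isLt
      rw [Finset.mem_coe, mem_range]
      show n - (s j).val < k + 1
      omega
  constructor
  · intro hH k hkN
    have hk : k ≤ n := by omega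
    rw [hsum k hk]
    have := hH (n - k) (by omega)
    have heq : n - (n - k) = k := by omega
    rwa [heq] at this
  · intro hE i hi
    rcases Nat.eq_or_lt_of_le hi with rfl | hi'
    · have : (Finset.univ.filter (fun j => i ≤ (s j).val)).card = 0 := by
        rw [Finset.card_eq_zero, Finset.filter_eq_empty_iff]
        intro j _
        have := (s j).isLt
        omega
      omega
    · have hk : n - i < N := by omega
      have := hE (n - i) hk
      rw [hsum (n - i) (by omega)] at this
      have heq : n - (n - i) = i := by omega
      rwa [heq] at this

lemma empt_val_lt {n m : ℕ} {t : Fin m → ZMod (n + 1)}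
    (hE : Empt (n + 1) (ctf t) ((n : ℕ) : ZMod (n + 1))) (j : Fin m) : (t j).val < n := by
  have h0 := hE 0 (by omega)
  simp only [zero_add, Finset.range_one, Finset.sum_singleton, Nat.cast_zero, sub_zero] at h0
  unfold ctf at h0
  have hfe : ∀ j', t j' ≠ ((n : ℕ) : ZMod (n + 1)) := by
    intro j' hj'
    have hmem : j' ∈ Finset.univ.filter (fun j' => t j' = ((n : ℕ) : ZMod (n + 1))) := by
      rw [Finset.mem_filter]
      exact ⟨mem_univ _, hj'⟩
    have hcard := Nat.le_zero.mp h0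
    rw [Finset.card_eq_zero] at hcard
    rw [hcard] at hmem
    exact absurd hmem (Finset.notMem_empty _)
  have hvlt : (t j).val < n + 1 := ZMod.val_lt _
  rcases Nat.lt_or_ge (t j).val n with h | h
  · exact h
  · exfalso
    have heq : (t j).val = n := by omega
    exact hfe j ((ZMod.natCast_rightInverse (t j)).symm.trans (congrArg _ heq))

lemma card_hall_eq_card_empt {n m : ℕ} (hn : 1 ≤ n) :
    (Finset.univ.filter (fun s : Fin m → Fin n => HallC n s)).card
      = (Finset.univ.filter (fun t : Fin m → ZMod (n + 1) =>
          Empt (n + 1) (ctf t) ((n : ℕ) : ZMod (n + 1)))).card := by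
  classical
  refine Finset.card_nbij' (i := fun s => fun j => (((s j).val : ℕ) : ZMod (n + 1)))
    (j := fun t => fun j => (⟨(t j).val % n, Nat.mod_lt _ (by omega)⟩ : Fin n)) ?_ ?_ ?_ ?_
  · intro s hs
    rw [Finset.mem_coe, Finset.mem_filter] at hs
    rw [Finset.mem_coe, Finset.mem_filter]
    exact ⟨mem_univ _, (hall_iff_empt s).mp hs.2⟩
  · intro t ht
    rw [Finset.mem_coe, Finset.mem_filter] at ht
    rw [Finset.mem_coe, Finset.mem_filter]
    refine ⟨mem_univ _, ?_⟩
    have hvlt : ∀ j, (t j).val < n := empt_val_lt ht.2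
    set s : Fin m → Fin n := fun j => (⟨(t j).val % n, Nat.mod_lt _ (by omega)⟩ : Fin n)
      with hsdef
    have hts : (fun j => (((s j).val : ℕ) : ZMod (n + 1))) = t := by
      funext j
      simp only [hsdef]
      rw [show (t j).val % n = (t j).val from Nat.mod_eq_of_lt (hvlt j)]
      exact ZMod.natCast_rightInverse (t j)
    rw [hall_iff_empt, hts]
    exact ht.2
  · intro s _
    funext j
    apply Fin.ext
    show ((((s j).val : ℕ) : ZMod (n + 1)).val) % n = (s j).val
    rw [ZMod.val_cast_of_lt (by omega : (s j).val < n + 1),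
      Nat.mod_eq_of_lt (s j).isLt]
  · intro t ht
    rw [Finset.mem_coe, Finset.mem_filter] at ht
    have hvlt : ∀ j, (t j).val < n := empt_val_lt ht.2
    funext j
    show ((((t j).val % n : ℕ) : ZMod (n + 1))) = t j
    rw [Nat.mod_eq_of_lt (hvlt j)]
    exact ZMod.natCast_rightInverse (t j)

end PPC

/-- On the directed path, the number of `(n,m)`-parking functions is
`(n - m + 1)(n + 1)^{m-1}`. -/
theorem path_parking_count (n m : ℕ) (hm1 : 1 ≤ m) (hmn : m ≤ n) :
    {s : Fin m → Fin n | IsPF (fun a b : Fin n => b.val = a.val + 1) s}.ncard =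
      (n - m + 1) * (n + 1) ^ (m - 1) := by
  classical
  have hn : 1 ≤ n := le_trans hm1 hmn
  have hset : {s : Fin m → Fin n | IsPF (fun a b : Fin n => b.val = a.val + 1) s}
      = ↑(Finset.univ.filter (fun s : Fin m → Fin n => PPC.HallC n s)) := by
    ext s
    simp [PPC.ispf_iff_hall]
  rw [hset, Set.ncard_coe_finset, PPC.card_hall_eq_card_empt hn,
    PPC.zmod_count hm1 (by omega : m < n + 1)]
  congr 1
  omega
end

section
/- For any mapping digraph M on [n] (functional digraph of some f : [n] → [n]) and 0 ≤ m ≤ n, the number of parking functions satisfies m! ≤ n(n-1)⋯(n-m+1) ≤ P(M, m) ≤ n^m, and the same bounds hold for the inverse mapping digraph M̃ obtained by reversing all edges. -/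
lemma inj_subset_pf {n m : ℕ} (D : Fin n → Fin n → Prop) :
    {s : Fin m → Fin n | Function.Injective s} ⊆ {s | IsPF D s} :=
  fun s hs => ⟨s, hs, fun _ => Relation.ReflTransGen.refl⟩

lemma pf_lower {n m : ℕ} (D : Fin n → Fin n → Prop) :
    n.descFactorial m ≤ {s : Fin m → Fin n | IsPF D s}.ncard := by
  classical
  have h1 : {s : Fin m → Fin n | Function.Injective s}.ncard
      = n.descFactorial m := by
    rw [← Nat.card_coe_set_eq]
    show Nat.card {f : Fin m → Fin n // Function.Injective f} = _
    rw [Nat.card_congr (Equiv.subtypeInjectiveEquivEmbedding (Fin m) (Fin n))]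
    simp [Nat.card_eq_fintype_card, Fintype.card_embedding_eq]
  calc n.descFactorial m = _ := h1.symm
    _ ≤ _ := Set.ncard_le_ncard (inj_subset_pf D) (Set.toFinite _)

lemma pf_upper {n m : ℕ} (D : Fin n → Fin n → Prop) :
    {s : Fin m → Fin n | IsPF D s}.ncard ≤ n ^ m := by
  classical
  calc {s : Fin m → Fin n | IsPF D s}.ncard
      ≤ (Set.univ : Set (Fin m → Fin n)).ncard :=
        Set.ncard_le_ncard (Set.subset_univ _) Set.finite_univ
    _ = n ^ m := by simp [Set.ncard_univ, Nat.card_eq_fintype_card]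

/-- For any mapping digraph `M_f` (edges `(i, f i)`) and its reverse `M̃_f`
(edges `(f i, i)`), `m! ≤ n^{\underline m} ≤ P(·, m) ≤ n^m`. -/
theorem mapping_parking_count_bounds (n m : ℕ) (hm : m ≤ n) (f : Fin n → Fin n) :
    m.factorial ≤ n.descFactorial m ∧
      n.descFactorial m ≤
        {s : Fin m → Fin n | IsPF (fun a b : Fin n => f a = b) s}.ncard ∧
      {s : Fin m → Fin n | IsPF (fun a b : Fin n => f a = b) s}.ncard ≤ n ^ m ∧
      n.descFactorial m ≤
        {s : Fin m → Fin n | IsPF (fun a b : Fin n => f b = a) s}.ncard ∧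
      {s : Fin m → Fin n | IsPF (fun a b : Fin n => f b = a) s}.ncard ≤ n ^ m := by
  refine ⟨?_, pf_lower _, pf_upper _, pf_lower _, pf_upper _⟩
  calc m.factorial = m.descFactorial m := (Nat.descFactorial_self m).symm
    _ ≤ n.descFactorial m := Nat.descFactorial_le m hm
end

section
/- Let M̃_f be an inverse mapping digraph on [n] and s ∈ [n]^n a parking function on M̃_f. Then in each directed cycle of M̃_f there exists at least one edge e such that s is still a parking function on the digraph obtained by deleting e. -/
namespace InvMapAux

open Function Finset

variable {n : ℕ}

lemma rt_iff (f : Fin n → Fin n) (x y : Fin n) :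
    Relation.ReflTransGen (fun a b : Fin n => f b = a) x y ↔ ∃ k, f^[k] y = x := by
  constructor
  · intro h
    induction h with
    | refl => exact ⟨0, rfl⟩
    | tail _ hzy ih =>
      obtain ⟨k, hk⟩ := ih
      exact ⟨k + 1, by rw [Function.iterate_succ_apply, hzy, hk]⟩
  · rintro ⟨k, hk⟩
    induction k generalizing y with
    | zero => simp at hk; subst hk; exact Relation.ReflTransGen.refl
    | succ k ih =>
      rw [Function.iterate_succ_apply] at hk
      exact (ih (f y) hk).tail rfl

lemma rt_del (f : Fin n → Fin n) (c d x y : Fin n)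
    (h : ∃ k, f^[k] y = x ∧ ∀ j < k, f^[j] y ≠ d) :
    Relation.ReflTransGen (fun x y : Fin n => f y = x ∧ ¬(x = c ∧ y = d)) x y := by
  obtain ⟨k, hk, hnd⟩ := h
  induction k generalizing y with
  | zero => simp at hk; subst hk; exact Relation.ReflTransGen.refl
  | succ k ih =>
    rw [Function.iterate_succ_apply] at hk
    have h2 : ∀ j < k, f^[j] (f y) ≠ d := by
      intro j hj
      have := hnd (j + 1) (by omega)
      rwa [Function.iterate_succ_apply] at this
    refine (ih (f y) hk h2).tail ⟨rfl, ?_⟩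
    rintro ⟨-, hyd⟩
    exact hnd 0 (by omega) hyd

open Classical in
/-- vertices reachable from `x` in the digraph with the edge into `d` deleted -/
noncomputable def S (f : Fin n → Fin n) (d x : Fin n) : Finset (Fin n) :=
  Finset.univ.filter (fun y => ∃ k, f^[k] y = x ∧ ∀ j < k, f^[j] y ≠ d)

lemma mem_S {f : Fin n → Fin n} {d x y : Fin n} :
    y ∈ S f d x ↔ ∃ k, f^[k] y = x ∧ ∀ j < k, f^[j] y ≠ d := by
  classical
  simp [S]

open Classical in
noncomputable def cnt (s : Fin n → Fin n) (A : Finset (Fin n)) : ℕ :=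
  (Finset.univ.filter (fun j => s j ∈ A)).card

lemma cnt_union (s : Fin n → Fin n) {A B : Finset (Fin n)} (h : Disjoint A B) :
    cnt s (A ∪ B) = cnt s A + cnt s B := by
  classical
  unfold cnt
  rw [← Finset.card_union_of_disjoint ?hd]
  case hd =>
    rw [Finset.disjoint_left]
    intro j hj1 hj2
    simp only [Finset.mem_filter] at hj1 hj2
    exact Finset.disjoint_left.mp h hj1.2 hj2.2
  congr 1
  ext j
  simp [Finset.mem_union]

lemma iter_comm (f : Fin n → Fin n) (i j : ℕ) (x : Fin n) :
    f^[i] (f^[j] x) = f^[j] (f^[i] x) := by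
  rw [← Function.iterate_add_apply, ← Function.iterate_add_apply, add_comm]

lemma iter_mul_period (f : Fin n → Fin n) (a : Fin n) (m : ℕ) (hma : f^[m] a = a) (j : ℕ) :
    f^[m * j] a = a := by
  rw [Function.iterate_mul]
  exact Function.iterate_fixed hma j

lemma mul_period_sum (m t : ℕ) (hm : 0 < m) : t * (m - 1) + t = m * t := by
  have h1 : m - 1 + 1 = m := by omega
  calc t * (m - 1) + t = t * ((m - 1) + 1) := by ring
    _ = t * m := by rw [h1]
    _ = m * t := by ring

lemma orbit_period (f : Fin n → Fin n) (a : Fin n) (m : ℕ) (hma : f^[m] a = a) (t : ℕ) :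
    f^[m] (f^[t] a) = f^[t] a := by
  rw [iter_comm, hma]

lemma orbit_min (f : Fin n → Fin n) (a : Fin n) (m : ℕ) (hm : 0 < m) (hma : f^[m] a = a)
    (hmin : ∀ w, 0 < w → w < m → f^[w] a ≠ a) (t w : ℕ) (h0 : 0 < w) (hw : w < m) :
    f^[w] (f^[t] a) ≠ f^[t] a := by
  intro h
  have hmt : f^[m * t] a = a := iter_mul_period f a m hma t
  have h1 : f^[m * t] a = f^[t * (m - 1)] (f^[t] a) := by
    rw [← Function.iterate_add_apply, mul_period_sum m t hm]
  have key : f^[w] a = a := by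
    calc f^[w] a = f^[w] (f^[m * t] a) := by rw [hmt]
      _ = f^[w] (f^[t * (m - 1)] (f^[t] a)) := by rw [h1]
      _ = f^[t * (m - 1)] (f^[w] (f^[t] a)) := iter_comm f _ _ _
      _ = f^[t * (m - 1)] (f^[t] a) := by rw [h]
      _ = f^[m * t] a := by rw [← h1]
      _ = a := hmt
  exact hmin w h0 hw key

lemma S_split (f : Fin n → Fin n) (m : ℕ) (u : Fin n)
    (hmu : f^[m] u = u) (humin : ∀ w, 0 < w → w < m → f^[w] u ≠ u)
    (p q : ℕ) (hp : 1 ≤ p) (hq : 1 ≤ q) (hpq : p + q ≤ m) :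
    S f u (f^[p + q] u) = S f u (f^[p] u) ∪ S f (f^[p] u) (f^[p + q] u) := by
  ext y
  simp only [mem_S, Finset.mem_union]
  constructor
  · rintro ⟨k, hk, hnd⟩
    by_cases hj : ∃ j, j < k ∧ f^[j] y = f^[p] u
    · obtain ⟨j, hj1, hj2⟩ := hj
      exact Or.inl ⟨j, hj2, fun j' hj' => hnd j' (by omega)⟩
    · push_neg at hj
      exact Or.inr ⟨k, hk, fun j hjk => hj j hjk⟩
  · rintro (⟨k, hk, hnd⟩ | ⟨k, hk, hnd⟩)
    · refine ⟨k + q, ?_, ?_⟩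
      · rw [add_comm k q, Function.iterate_add_apply, hk, ← Function.iterate_add_apply,
          add_comm q p]
      · intro j hj
        rcases lt_or_ge j k with h | h
        · exact hnd j h
        · have he : f^[j] y = f^[(j - k) + p] u := by
            have h7 : f^[(j - k) + k] y = f^[j] y := by
              congr 1
              omega
            rw [← h7, Function.iterate_add_apply, hk, ← Function.iterate_add_apply]
          rw [he]
          exact humin ((j - k) + p) (by omega) (by omega)
    · refine ⟨k, hk, ?_⟩
      intro j hj hcon
      have h2 : f^[j + p] y = f^[p] u := by
        rw [add_comm j p, Function.iterate_add_apply, hcon]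
      rcases lt_or_ge (j + p) k with h | h
      · exact hnd (j + p) h h2
      · have hr1 : 1 ≤ k - j := by omega
        have hr2 : k - j ≤ p := by omega
        have h3 : f^[k - j] u = f^[p + q] u := by
          have h8 : f^[(k - j) + j] y = f^[p + q] u := by
            have : k - j + j = k := by omega
            rw [this, hk]
          rw [Function.iterate_add_apply, hcon] at h8
          exact h8
        have h4 : f^[p + q - (k - j)] u = u := by
          have h5 : f^[m - (k - j) + (k - j)] u = u := by
            have : m - (k - j) + (k - j) = m := by omega
            rw [this, hmu]
          have h6 : f^[m - (k - j) + (p + q)] u = u := by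
            rw [Function.iterate_add_apply, ← h3, ← Function.iterate_add_apply]
            exact h5
          have h9 : m - (k - j) + (p + q) = (p + q - (k - j)) + m := by omega
          rw [h9, Function.iterate_add_apply, hmu] at h6
          exact h6
        exact humin (p + q - (k - j)) (by omega) (by omega) h4

lemma S_split_disj (f : Fin n → Fin n) (m : ℕ) (u : Fin n)
    (hmu : f^[m] u = u) (humin : ∀ w, 0 < w → w < m → f^[w] u ≠ u)
    (p q : ℕ) (hp : 1 ≤ p) (hq : 1 ≤ q) (hpq : p + q ≤ m) :
    Disjoint (S f u (f^[p] u)) (S f (f^[p] u) (f^[p + q] u)) := by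
  rw [Finset.disjoint_left]
  intro y hy1 hy2
  rw [mem_S] at hy1 hy2
  obtain ⟨k1, hk1, h1⟩ := hy1
  obtain ⟨k2, hk2, h2⟩ := hy2
  rcases lt_or_ge k1 k2 with h | h
  · exact h2 k1 h hk1
  · have h3 : f^[(k1 - k2) + (p + q)] u = f^[p] u := by
      have h8 : f^[(k1 - k2) + k2] y = f^[p] u := by
        have : k1 - k2 + k2 = k1 := by omega
        rw [this, hk1]
      rw [Function.iterate_add_apply, hk2, ← Function.iterate_add_apply] at h8
      exact h8
    have h4 : f^[(k1 - k2) + q] u = u := by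
      have h5 := congrArg (f^[m - p]) h3
      rw [← Function.iterate_add_apply, ← Function.iterate_add_apply] at h5
      have e1 : m - p + ((k1 - k2) + (p + q)) = ((k1 - k2) + q) + m := by omega
      have e2 : m - p + p = m := by omega
      rw [e1, e2, hmu, Function.iterate_add_apply, hmu] at h5
      exact h5
    have hge : m ≤ (k1 - k2) + q := by
      by_contra hlt
      exact humin ((k1 - k2) + q) (by omega) (by omega) h4
    have hj : f^[(m - (p + q)) + k2] y = u := by
      rw [Function.iterate_add_apply, hk2, ← Function.iterate_add_apply]
      have : m - (p + q) + (p + q) = m := by omega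
      rw [this, hmu]
    exact h1 ((m - (p + q)) + k2) (by omega) hj

open Classical in
noncomputable def Rch (f : Fin n → Fin n) (x : Fin n) : Finset (Fin n) :=
  Finset.univ.filter (fun y => ∃ k, f^[k] y = x)

lemma mem_Rch {f : Fin n → Fin n} {x y : Fin n} : y ∈ Rch f x ↔ ∃ k, f^[k] y = x := by
  classical
  simp [Rch]

lemma S_self (f : Fin n → Fin n) (u : Fin n) : S f u u = Rch f u := by
  ext y
  rw [mem_S, mem_Rch]
  constructor
  · rintro ⟨k, hk, -⟩; exact ⟨k, hk⟩
  · intro h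
    exact ⟨Nat.find h, Nat.find_spec h, fun j hj => Nat.find_min h hj⟩

lemma cnt_Rch_eq (f : Fin n → Fin n) (m : ℕ) (u : Fin n) (hm : 0 < m) (hmu : f^[m] u = u)
    (s g : Fin n → Fin n) (hg : Function.Injective g)
    (hgr : ∀ i, ∃ k, f^[k] (g i) = s i) :
    cnt s (Rch f u) = (Rch f u).card := by
  classical
  have hbij : Function.Bijective g := (Finite.injective_iff_bijective).mp hg
  let e := Equiv.ofBijective g hbij
  unfold cnt
  apply le_antisymm
  · apply Finset.card_le_card_of_injOn g
    · intro j hj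
      simp only [Finset.mem_coe, Finset.mem_filter] at hj ⊢
      rw [mem_Rch] at hj ⊢
      obtain ⟨k2, hk2⟩ := hj.2
      obtain ⟨k1, hk1⟩ := hgr j
      exact ⟨k2 + k1, by rw [Function.iterate_add_apply, hk1, hk2]⟩
    · exact fun x _ y _ h => hg h
  · apply Finset.card_le_card_of_injOn (fun v => e.symm v)
    · intro v hv
      rw [Finset.mem_coe, mem_Rch] at hv
      obtain ⟨k2, hk2⟩ := hv
      simp only [Finset.mem_coe, Finset.mem_filter]
      refine ⟨Finset.mem_univ _, ?_⟩
      rw [mem_Rch]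
      obtain ⟨k, hk⟩ := hgr (e.symm v)
      have hgv : g (e.symm v) = v := e.apply_symm_apply v
      rw [hgv] at hk
      rcases le_or_gt k k2 with h | h
      · refine ⟨k2 - k, ?_⟩
        rw [← hk, ← Function.iterate_add_apply]
        have : k2 - k + k = k2 := by omega
        rw [this, hk2]
      · have hsj : s (e.symm v) = f^[k - k2] u := by
          rw [← hk2, ← hk, ← Function.iterate_add_apply]
          congr 1
          omega
        refine ⟨(k - k2) * (m - 1), ?_⟩
        rw [hsj, ← Function.iterate_add_apply, mul_period_sum m (k - k2) hm,
          Function.iterate_mul]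
        exact Function.iterate_fixed hmu (k - k2)
    · intro x _ y _ hxy
      have := congrArg e hxy
      simpa using this

noncomputable def phi (f s : Fin n → Fin n) (d x : Fin n) : ℤ :=
  (cnt s (S f d x) : ℤ) - ((S f d x).card : ℤ)

lemma phi_split (f s : Fin n → Fin n) (m : ℕ) (u : Fin n)
    (hmu : f^[m] u = u) (humin : ∀ w, 0 < w → w < m → f^[w] u ≠ u)
    (p q : ℕ) (hp : 1 ≤ p) (hq : 1 ≤ q) (hpq : p + q ≤ m) :
    phi f s u (f^[p + q] u) = phi f s u (f^[p] u) + phi f s (f^[p] u) (f^[p + q] u) := by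
  have hsp := S_split f m u hmu humin p q hp hq hpq
  have hd := S_split_disj f m u hmu humin p q hp hq hpq
  unfold phi
  rw [hsp, cnt_union s hd, Finset.card_union_of_disjoint hd]
  push_cast
  ring

lemma phi_self (f s : Fin n → Fin n) (m : ℕ) (u : Fin n) (hm : 0 < m) (hmu : f^[m] u = u)
    (g : Fin n → Fin n) (hg : Function.Injective g)
    (hgr : ∀ i, ∃ k, f^[k] (g i) = s i) :
    phi f s u u = 0 := by
  unfold phi
  rw [S_self, cnt_Rch_eq f m u hm hmu s g hg hgr]
  ring

end InvMapAux

open InvMapAux Function in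
/-- If `s ∈ [n]^n` is a parking function on the inverse mapping digraph `M̃_f`
(edges `(f i, i)`), then each directed cycle of `M̃_f` contains an edge `(c,d)`
whose deletion leaves `s` a parking function.  An edge `(a,b)` lies on a cycle iff
`a` is reachable back from `b`; `(c,d)` is in the same cycle as `(a,b)`. -/
theorem inverse_mapping_deletable_cycle_edge (n : ℕ) (f : Fin n → Fin n)
    (s : Fin n → Fin n)
    (hpf : IsPF (fun a b : Fin n => f b = a) s)
    (a b : Fin n) (hab : f b = a)
    (hcyc : Relation.ReflTransGen (fun a b : Fin n => f b = a) b a) :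
    ∃ c d : Fin n, f d = c ∧
      Relation.ReflTransGen (fun a b : Fin n => f b = a) d c ∧
      Relation.ReflTransGen (fun a b : Fin n => f b = a) a c ∧
      Relation.ReflTransGen (fun a b : Fin n => f b = a) c a ∧
      IsPF (fun x y : Fin n => f y = x ∧ ¬(x = c ∧ y = d)) s := by
  classical
  obtain ⟨g, hg, hgr0⟩ := hpf
  have hgr : ∀ i, ∃ k, f^[k] (g i) = s i := fun i => (rt_iff f (s i) (g i)).mp (hgr0 i)
  -- a is a periodic point
  obtain ⟨k0, hk0⟩ := (rt_iff f b a).mp hcyc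
  have hper : f^[k0 + 1] a = a := by
    rw [Function.iterate_succ_apply', hk0, hab]
  set m := Function.minimalPeriod f a with hmdef
  have hm : 0 < m :=
    (show Function.IsPeriodicPt f (k0 + 1) a from hper).minimalPeriod_pos (Nat.succ_pos k0)
  have hma : f^[m] a = a := Function.iterate_minimalPeriod
  have hmin : ∀ w, 0 < w → w < m → f^[w] a ≠ a := by
    intro w h0 hw heq
    have := (show Function.IsPeriodicPt f w a from heq).minimalPeriod_le h0
    omega
  -- choose the cut point by the cycle lemma (maximize prefix Φ)
  obtain ⟨P, hPmem, hPmax⟩ := Finset.exists_max_image (Finset.Icc 1 m)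
    (fun p => phi f s a (f^[p] a)) ⟨1, Finset.mem_Icc.mpr ⟨le_refl 1, hm⟩⟩
  rw [Finset.mem_Icc] at hPmem
  obtain ⟨hP1, hPm⟩ := hPmem
  set d : Fin n := f^[P] a with hddef
  have hdper : f^[m] d = d := orbit_period f a m hma P
  have hdmin : ∀ w, 0 < w → w < m → f^[w] d ≠ d :=
    fun w h0 hw => orbit_min f a m hm hma hmin P w h0 hw
  have hiter : ∀ i j : ℕ, f^[i] (f^[j] a) = f^[i + j] a :=
    fun i j => (Function.iterate_add_apply f i j a).symm
  -- Φ(d, p) ≤ 0 for all p ∈ [1, m]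
  have hPhi : ∀ p, 1 ≤ p → p ≤ m → phi f s d (f^[p] d) ≤ 0 := by
    intro p hp1 hpm
    rcases eq_or_lt_of_le hpm with hpe | hplt
    · have hfp : f^[p] d = d := by rw [hpe, hdper]
      rw [hfp]
      exact le_of_eq (phi_self f s m d hm hdper g hg hgr)
    · rcases le_or_gt (P + p) m with hle | hgt
      · -- no wrap
        have hsplit := phi_split f s m a hma hmin P p hP1 (by omega) hle
        have hmax := hPmax (P + p) (Finset.mem_Icc.mpr ⟨by omega, hle⟩)
        have heq2 : phi f s d (f^[p] d) = phi f s (f^[P] a) (f^[P + p] a) := by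
          rw [hddef, hiter p P, add_comm p P]
        rw [heq2]
        have hmax : phi f s a (f^[P + p] a) ≤ phi f s a (f^[P] a) := hmax
        linarith
      · -- wrap around
        set r := P + p - m with hrdef
        have hr1 : 1 ≤ r := by omega
        have hrP : r < P := by omega
        have h0 : phi f s d (f^[p + (m - p)] d) =
            phi f s d (f^[p] d) + phi f s (f^[p] d) (f^[p + (m - p)] d) :=
          phi_split f s m d hdper hdmin p (m - p) hp1 (by omega) (by omega)
        have hpmp : p + (m - p) = m := by omega
        rw [hpmp, hdper] at h0
        have hzero : phi f s d d = 0 := phi_self f s m d hm hdper g hg hgr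
        have hfr : f^[p] d = f^[r] a := by
          rw [hddef, hiter p P]
          have hexp : p + P = r + m := by omega
          rw [hexp, Function.iterate_add_apply, hma]
        have hsplit2 := phi_split f s m a hma hmin r (P - r) hr1 (by omega) (by omega)
        have hrr : r + (P - r) = P := by omega
        rw [hrr] at hsplit2
        have hmax2 := hPmax r (Finset.mem_Icc.mpr ⟨hr1, by omega⟩)
        have hmax2 : phi f s a (f^[r] a) ≤ phi f s a (f^[P] a) := hmax2
        rw [hzero, hfr] at h0
        rw [hddef] at h0
        rw [hfr]
        rw [hddef]
        linarith
  -- convert to card inequality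
  have hPhiN : ∀ p, 1 ≤ p → p ≤ m →
      cnt s (InvMapAux.S f d (f^[p] d)) ≤ (InvMapAux.S f d (f^[p] d)).card := by
    intro p h1 h2
    have := hPhi p h1 h2
    unfold phi at this
    omega
  -- normalization into [1, m]
  have hnorm : ∀ w : ℕ, 1 ≤ w → ∃ p, 1 ≤ p ∧ p ≤ m ∧ f^[p] d = f^[w] d := by
    intro w hw
    refine ⟨(w - 1) % m + 1, by omega, by have := Nat.mod_lt (w - 1) hm; omega, ?_⟩
    have hmul : f^[m * ((w - 1) / m)] d = d := by
      rw [Function.iterate_mul]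
      exact Function.iterate_fixed hdper _
    have hwe : w = (w - 1) % m + 1 + m * ((w - 1) / m) := by
      have := Nat.mod_add_div (w - 1) m
      omega
    have hkey : f^[(w - 1) % m + 1] (f^[m * ((w - 1) / m)] d) = f^[w] d := by
      rw [← Function.iterate_add_apply, ← hwe]
    rw [hmul] at hkey
    exact hkey
  -- the "on cycle" predicate
  set OnC : Fin n → Prop := fun x => ∃ p, 1 ≤ p ∧ p ≤ m ∧ f^[p] d = x with hOnC
  -- g i works when s i is off the cycle
  have gmem : ∀ i, ¬ OnC (s i) → g i ∈ InvMapAux.S f d (s i) := by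
    intro i hnc
    obtain ⟨k1, hspec⟩ := hgr i
    refine mem_S.mpr ⟨k1, hspec, ?_⟩
    intro j hj heq
    exfalso
    apply hnc
    have hsi : s i = f^[k1 - j] d := by
      rw [← hspec, ← heq, ← Function.iterate_add_apply]
      congr 1
      omega
    obtain ⟨p, hp1, hpm, hpe⟩ := hnorm (k1 - j) (by omega)
    exact ⟨p, hp1, hpm, by rw [hpe, ← hsi]⟩
  -- Hall's condition
  have hall : ∀ A : Finset (Fin n), A.card ≤ (A.biUnion fun i => InvMapAux.S f d (s i)).card := by
    intro A
    by_cases hA : ∃ i ∈ A, OnC (s i)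
    · -- some index parks on the cycle
      set PS : Finset ℕ := (Finset.Icc 1 m).filter (fun p => ∃ i ∈ A, f^[p] d = s i) with hPS
      have hPSne : PS.Nonempty := by
        obtain ⟨i, hiA, p, hp1, hpm, hpe⟩ := hA
        exact ⟨p, Finset.mem_filter.mpr ⟨Finset.mem_Icc.mpr ⟨hp1, hpm⟩, ⟨i, hiA, hpe⟩⟩⟩
      obtain ⟨Q, hQPS, hQmax⟩ := Finset.exists_max_image PS (fun p => p) hPSne
      obtain ⟨hQIcc, i0, hi0A, hi0⟩ := Finset.mem_filter.mp hQPS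
      rw [Finset.mem_Icc] at hQIcc
      obtain ⟨hQ1, hQm⟩ := hQIcc
      set RP := InvMapAux.S f d (f^[Q] d) with hRP
      -- cycle vertices with index ≤ Q are in RP
      have hcyc_mem : ∀ p, 1 ≤ p → p ≤ Q → f^[p] d ∈ RP := by
        intro p hp1 hpQ
        refine mem_S.mpr ⟨Q - p, ?_, ?_⟩
        · rw [← Function.iterate_add_apply]
          congr 1
          omega
        · intro j hj heq
          rw [← Function.iterate_add_apply] at heq
          exact hdmin (j + p) (by omega) (by omega) heq
      have hOnC_RP : ∀ i ∈ A, OnC (s i) → s i ∈ RP := by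
        rintro i hiA ⟨p, hp1, hpm, hpe⟩
        have hpPS : p ∈ PS := Finset.mem_filter.mpr
          ⟨Finset.mem_Icc.mpr ⟨hp1, hpm⟩, ⟨i, hiA, hpe⟩⟩
        have hpQ : p ≤ Q := hQmax p hpPS
        rw [← hpe]
        exact hcyc_mem p hp1 hpQ
      -- indices with s i outside RP
      have hA2prop : ∀ i ∈ A, s i ∉ RP → g i ∈ InvMapAux.S f d (s i) ∧ g i ∉ RP := by
        intro i hiA hout
        have hnc : ¬ OnC (s i) := fun hc => hout (hOnC_RP i hiA hc)
        refine ⟨gmem i hnc, ?_⟩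
        intro hgRP
        rw [hRP, mem_S] at hgRP
        obtain ⟨k2, hk2, h2⟩ := hgRP
        obtain ⟨k, hk⟩ := hgr i
        rcases le_or_gt k k2 with h | h
        · apply hout
          rw [hRP]
          refine mem_S.mpr ⟨k2 - k, ?_, ?_⟩
          · rw [← hk, ← Function.iterate_add_apply]
            have : k2 - k + k = k2 := by omega
            rw [this, hk2]
          · intro j hj heq
            rw [← hk, ← Function.iterate_add_apply] at heq
            exact h2 (j + k) (by omega) heq
        · apply hnc
          have hsi : s i = f^[(k - k2) + Q] d := by
            rw [← hk]
            have h8 : f^[(k - k2) + k2] (g i) = f^[k] (g i) := by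
              congr 1
              omega
            rw [← h8, Function.iterate_add_apply, hk2, ← Function.iterate_add_apply]
          obtain ⟨p, hp1, hpm, hpe⟩ := hnorm ((k - k2) + Q) (by omega)
          exact ⟨p, hp1, hpm, by rw [hpe, ← hsi]⟩
      set B := A.filter (fun i => s i ∈ RP) with hB
      set A2 := A.filter (fun i => s i ∉ RP) with hA2
      have hcardA : B.card + A2.card = A.card :=
        Finset.card_filter_add_card_filter_not _
      have hBle : B.card ≤ cnt s RP := by
        unfold cnt
        apply Finset.card_le_card
        intro i hi
        rw [hB, Finset.mem_filter] at hi
        simp only [Finset.mem_filter]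
        exact ⟨Finset.mem_univ _, hi.2⟩
      have hcntle : cnt s RP ≤ RP.card := hPhiN Q hQ1 hQm
      have hsub : RP ∪ A2.image g ⊆ A.biUnion fun i => InvMapAux.S f d (s i) := by
        intro x hx
        rw [Finset.mem_union] at hx
        rcases hx with hx | hx
        · refine Finset.mem_biUnion.mpr ⟨i0, hi0A, ?_⟩
          rw [← hi0]
          exact hx
        · rw [Finset.mem_image] at hx
          obtain ⟨i, hi, rfl⟩ := hx
          rw [hA2, Finset.mem_filter] at hi
          exact Finset.mem_biUnion.mpr ⟨i, hi.1, (hA2prop i hi.1 hi.2).1⟩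
      have hdisj : Disjoint RP (A2.image g) := by
        rw [Finset.disjoint_left]
        intro x hx1 hx2
        rw [Finset.mem_image] at hx2
        obtain ⟨i, hi, rfl⟩ := hx2
        rw [hA2, Finset.mem_filter] at hi
        exact (hA2prop i hi.1 hi.2).2 hx1
      have himg : (A2.image g).card = A2.card := Finset.card_image_of_injective _ hg
      calc A.card = B.card + A2.card := hcardA.symm
        _ ≤ RP.card + (A2.image g).card := by omega
        _ = (RP ∪ A2.image g).card := (Finset.card_union_of_disjoint hdisj).symm
        _ ≤ _ := Finset.card_le_card hsub
    · -- no index parks on the cycle: use g directly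
      push_neg at hA
      apply Finset.card_le_card_of_injOn g
      · intro i hi
        exact Finset.mem_biUnion.mpr ⟨i, hi, gmem i (hA i hi)⟩
      · exact fun x _ y _ h => hg h
  -- apply Hall's theorem
  obtain ⟨g', hg'inj, hg'mem⟩ :=
    (Finset.all_card_le_biUnion_card_iff_exists_injective
      (fun i => InvMapAux.S f d (s i))).mp hall
  refine ⟨f d, d, rfl, ?_, ?_, ?_, ?_⟩
  · -- d reaches f d
    rw [rt_iff]
    refine ⟨m - 1, ?_⟩
    have h9 : f^[m - 1] (f d) = f^[m] d := by
      rw [← Function.iterate_succ_apply]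
      congr 1
      omega
    rw [h9, hdper]
  · -- a reaches f d
    rw [rt_iff]
    have hfd : f d = f^[P + 1] a := by
      rw [hddef, Function.iterate_succ_apply']
    refine ⟨(P + 1) * (m - 1), ?_⟩
    rw [hfd, ← Function.iterate_add_apply, mul_period_sum m (P + 1) hm,
      Function.iterate_mul]
    exact Function.iterate_fixed hma (P + 1)
  · -- f d reachable from a
    rw [rt_iff]
    refine ⟨P + 1, ?_⟩
    rw [hddef, Function.iterate_succ_apply']
  · exact ⟨g', hg'inj, fun i => rt_del f (f d) d (s i) (g' i) (mem_S.mp (hg'mem i))⟩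
end

section
/- There exists a tree T on 4 vertices (the star with one edge subdivided: 4—3, 3—1, 3—2, rooted at 4 with edges toward the root) such that for m = 2 drivers, P(T, 2) = 15 > 14 = P(T̃, 2). Hence the inequality P(T,m) ≤ P(T̃,m) can fail when m < n. -/
def myD1 : Fin 4 → Fin 4 → Prop := fun a b =>
  (a = 0 ∧ b = 2) ∨ (a = 1 ∧ b = 2) ∨ (a = 2 ∧ b = 3)

def myD2 : Fin 4 → Fin 4 → Prop := fun a b =>
  (b = 0 ∧ a = 2) ∨ (b = 1 ∧ a = 2) ∨ (b = 2 ∧ a = 3)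

def myR1 : Fin 4 → Fin 4 → Prop := fun a b =>
  a = b ∨ (a = 0 ∧ (b = 2 ∨ b = 3)) ∨ (a = 1 ∧ (b = 2 ∨ b = 3)) ∨ (a = 2 ∧ b = 3)

def myR2 : Fin 4 → Fin 4 → Prop := fun a b => myR1 b a

instance : ∀ a b, Decidable (myR1 a b) := fun a b => by unfold myR1; infer_instance
instance : ∀ a b, Decidable (myR2 a b) := fun a b => by unfold myR2; infer_instance

lemma step1 : ∀ a b c : Fin 4, myR1 a b → myD1 b c → myR1 a c := by unfold myR1 myD1; decide

lemma step2 : ∀ a b c : Fin 4, myR2 a b → myD2 b c → myR2 a c := by unfold myR2 myR1 myD2; decide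

lemma reach1 (a b : Fin 4) : Relation.ReflTransGen myD1 a b ↔ myR1 a b := by
  constructor
  · intro h
    induction h with
    | refl => left; rfl
    | tail h1 h2 ih => exact step1 _ _ _ ih h2
  · intro h
    rcases h with rfl | ⟨rfl, rfl | rfl⟩ | ⟨rfl, rfl | rfl⟩ | ⟨rfl, rfl⟩
    · exact .refl
    · exact .single (Or.inl ⟨rfl, rfl⟩)
    · exact .tail (.single (Or.inl ⟨rfl, rfl⟩)) (Or.inr (Or.inr ⟨rfl, rfl⟩))
    · exact .single (Or.inr (Or.inl ⟨rfl, rfl⟩))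
    · exact .tail (.single (Or.inr (Or.inl ⟨rfl, rfl⟩))) (Or.inr (Or.inr ⟨rfl, rfl⟩))
    · exact .single (Or.inr (Or.inr ⟨rfl, rfl⟩))

lemma reach2 (a b : Fin 4) : Relation.ReflTransGen myD2 a b ↔ myR2 a b := by
  constructor
  · intro h
    induction h with
    | refl => left; rfl
    | tail h1 h2 ih => exact step2 _ _ _ ih h2
  · intro h
    rcases h with rfl | ⟨rfl, rfl | rfl⟩ | ⟨rfl, rfl | rfl⟩ | ⟨rfl, rfl⟩
    · exact .refl
    · exact .single (Or.inl ⟨rfl, rfl⟩)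
    · exact .tail (.single (Or.inr (Or.inr ⟨rfl, rfl⟩))) (Or.inl ⟨rfl, rfl⟩)
    · exact .single (Or.inr (Or.inl ⟨rfl, rfl⟩))
    · exact .tail (.single (Or.inr (Or.inr ⟨rfl, rfl⟩))) (Or.inr (Or.inl ⟨rfl, rfl⟩))
    · exact .single (Or.inr (Or.inr ⟨rfl, rfl⟩))

lemma set1_eq :
    {s : Fin 2 → Fin 4 | IsPF myD1 s} =
      ↑((Finset.univ : Finset (Fin 2 → Fin 4)).filter
        (fun s => ∃ g : Fin 2 → Fin 4, Function.Injective g ∧ ∀ i, myR1 (s i) (g i))) := by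
  ext s
  simp [IsPF, reach1]

lemma set2_eq :
    {s : Fin 2 → Fin 4 | IsPF myD2 s} =
      ↑((Finset.univ : Finset (Fin 2 → Fin 4)).filter
        (fun s => ∃ g : Fin 2 → Fin 4, Function.Injective g ∧ ∀ i, myR2 (s i) (g i))) := by
  ext s
  simp [IsPF, reach2]

/-- The sink tree on 4 vertices with edges `1 → 3`, `2 → 3`, `3 → 4`
(0-indexed: `0 → 2`, `1 → 2`, `2 → 3`) has 15 parking functions with 2 drivers,
while its reverse (the source tree) has only 14: so `P(T,m) ≤ P(T̃,m)` can fail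
for `m < n`. -/
theorem sink_vs_source_counterexample :
    {s : Fin 2 → Fin 4 |
        IsPF (fun a b : Fin 4 =>
          (a = 0 ∧ b = 2) ∨ (a = 1 ∧ b = 2) ∨ (a = 2 ∧ b = 3)) s}.ncard = 15 ∧
      {s : Fin 2 → Fin 4 |
        IsPF (fun a b : Fin 4 =>
          (b = 0 ∧ a = 2) ∨ (b = 1 ∧ a = 2) ∨ (b = 2 ∧ a = 3)) s}.ncard = 14 ∧
      {s : Fin 2 → Fin 4 |
        IsPF (fun a b : Fin 4 =>
          (b = 0 ∧ a = 2) ∨ (b = 1 ∧ a = 2) ∨ (b = 2 ∧ a = 3)) s}.ncard <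
        {s : Fin 2 → Fin 4 |
          IsPF (fun a b : Fin 4 =>
            (a = 0 ∧ b = 2) ∨ (a = 1 ∧ b = 2) ∨ (a = 2 ∧ b = 3)) s}.ncard := by
  have h1 : {s : Fin 2 → Fin 4 | IsPF myD1 s}.ncard = 15 := by
    rw [set1_eq, Set.ncard_coe_finset]
    decide
  have h2 : {s : Fin 2 → Fin 4 | IsPF myD2 s}.ncard = 14 := by
    rw [set2_eq, Set.ncard_coe_finset]
    decide
  exact ⟨h1, h2, by change {s : Fin 2 → Fin 4 | IsPF myD2 s}.ncard < {s : Fin 2 → Fin 4 | IsPF myD1 s}.ncard; rw [h1, h2]; norm_num⟩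
end

section
/- Let T̃ be a source tree on [n], s ∈ [n]^n, and (u,w) an edge of T̃ such that |{i : s_i ∈ T̃_w}| = |T̃_w|. If s is a parking function on T̃, then at least one s_i equals w, and in every successful parking assignment no driver starting outside T̃_w parks inside T̃_w (i.e., every injection g witnessing the parking function maps {i : s_i ∈ T̃_w} bijectively onto T̃_w). -/
/-- If `(u,w)` is an edge of a source tree and exactly `|T̃_w|` drivers prefer the
subtree `T̃_w`, then for a parking function `s` some driver prefers `w`, and in any
successful parking assignment `g`, drivers park inside `T̃_w` exactly when they
prefer a spot in `T̃_w`. -/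
theorem full_subtree_edge_unused (n : ℕ) (D : Fin n → Fin n → Prop) (r : Fin n)
    (hT : IsSourceTree D r) (s : Fin n → Fin n) (u w : Fin n) (huw : D u w)
    (hfull : {i : Fin n | Relation.ReflTransGen D w (s i)}.ncard =
      {v : Fin n | Relation.ReflTransGen D w v}.ncard)
    (hpf : ∃ g : Fin n → Fin n, Function.Injective g ∧
      ∀ i, Relation.ReflTransGen D (s i) (g i)) :
    (∃ i, s i = w) ∧
      ∀ g : Fin n → Fin n, Function.Bijective g →
        (∀ i, Relation.ReflTransGen D (s i) (g i)) →
        ∀ i, Relation.ReflTransGen D w (g i) → Relation.ReflTransGen D w (s i) := by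
  obtain ⟨hr, hpar, hroot⟩ := hT
  -- a source tree is acyclic
  have hnc : ∀ v : Fin n, ¬ Relation.TransGen D v v := by
    intro v
    have hv := hr v
    induction hv with
    | refl =>
      intro h
      obtain ⟨c, _, hc⟩ := (Relation.TransGen.tail'_iff).mp h
      exact hroot c hc
    | tail hab hbc ih =>
      rename_i b c
      intro h
      obtain ⟨z, hcz, hzc⟩ := (Relation.TransGen.tail'_iff).mp h
      have hz : z = b := hpar z b c hzc hbc
      subst hz
      exact ih (Relation.TransGen.head' hbc hcz)
  -- hence reachability is antisymmetric
  have hanti : ∀ a b : Fin n, Relation.ReflTransGen D a b →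
      Relation.ReflTransGen D b a → a = b := by
    intro a b hab hba
    by_contra hne
    rcases hab.cases_head with heq | ⟨c, hac, hcb⟩
    · exact hne heq
    · exact hnc a (Relation.TransGen.head' hac (hcb.trans hba))
  set A : Set (Fin n) := {i : Fin n | Relation.ReflTransGen D w (s i)} with hA
  set B : Set (Fin n) := {v : Fin n | Relation.ReflTransGen D w v} with hB
  -- for any successful assignment, the image of A is exactly B
  have himg : ∀ g : Fin n → Fin n, Function.Injective g →
      (∀ i, Relation.ReflTransGen D (s i) (g i)) → g '' A = B := by
    intro g hginj hg
    have hsub : g '' A ⊆ B := by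
      rintro x ⟨i, hi, rfl⟩
      exact Relation.ReflTransGen.trans hi (hg i)
    refine Set.eq_of_subset_of_ncard_le hsub ?_ (Set.toFinite _)
    rw [Set.ncard_image_of_injective _ hginj]
    exact hfull.ge
  constructor
  · obtain ⟨g, hginj, hg⟩ := hpf
    have hwB : w ∈ B := Relation.ReflTransGen.refl
    rw [← himg g hginj hg] at hwB
    obtain ⟨i, hi, hgi⟩ := hwB
    refine ⟨i, hanti (s i) w ?_ hi⟩
    rw [← hgi]; exact hg i
  · intro g hbij hg i hwi
    have : g i ∈ B := hwi
    rw [← himg g hbij.injective hg] at this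
    obtain ⟨j, hj, hgj⟩ := this
    have := hbij.injective hgj
    subst this
    exact hj
end
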